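/- arXiv:2003.05172 — 7 statements merged into one kernel-verified Lean document; each statement's English description precedes it below -/
import Mathlib

section
/- Let A be a Hopf algebra with a direct sum decomposition A = ⊕_{g∈Γ} A_g over a group Γ that is a cocentral grading with A_g ≠ 0 for all g (equivalently, the associated cocentral Hopf algebra map p : A → kΓ is surjective). If g ∈ Γ and y, z ∈ A satisfy x·y = x·z for all x ∈ A_g, then y = z. -/
open TensorProduct

/-- If `A` is a Hopf algebra with a cocentral grading `A = ⊕_{g∈Γ} A_g` such that every
component is nonzero (equivalently, the associated cocentral Hopf algebra map `A → kΓ` is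
surjective), then multiplication by the whole component `A_g` separates points: if
`x * y = x * z` for all `x ∈ A_g` then `y = z`. -/
theorem graded_component_separates
    (k : Type*) [Field k] (A : Type*) [Ring A] [HopfAlgebra k A]
    (Γ : Type*) [Group Γ] [DecidableEq Γ]
    (𝒜 : Γ → Submodule k A)
    (hdirect : DirectSum.IsInternal 𝒜)
    (hone : (1 : A) ∈ 𝒜 1)
    (hmul : ∀ g h : Γ, ∀ a ∈ 𝒜 g, ∀ b ∈ 𝒜 h, a * b ∈ 𝒜 (g * h))
    (hcomul : ∀ g : Γ, ∀ a ∈ 𝒜 g,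
      Coalgebra.comul (R := k) a ∈
        LinearMap.range (TensorProduct.map (𝒜 g).subtype (𝒜 g).subtype))
    (hantipode : ∀ g : Γ, ∀ a ∈ 𝒜 g, HopfAlgebra.antipode (R := k) a ∈ 𝒜 g⁻¹)
    (hne : ∀ g : Γ, 𝒜 g ≠ ⊥) :
    ∀ (g : Γ) (y z : A), (∀ x ∈ 𝒜 g, x * y = x * z) → y = z := by
  intro g y z h
  -- Step 1: there is an element of `𝒜 g` with nonzero counit.
  obtain ⟨a0, ha0, ha0ne⟩ := (Submodule.ne_bot_iff _).mp (hne g)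
  have hε : ∃ a1 ∈ 𝒜 g, Coalgebra.counit (R := k) a1 ≠ 0 := by
    by_contra hc
    push_neg at hc
    obtain ⟨t0, ht0⟩ := hcomul g a0 ha0
    have hz : (Coalgebra.counit (R := k) (A := A)).rTensor A (Coalgebra.comul (R := k) a0)
        = 0 := by
      rw [← ht0, ← LinearMap.comp_apply, LinearMap.rTensor, ← TensorProduct.map_comp]
      have : (Coalgebra.counit (R := k) (A := A)) ∘ₗ (𝒜 g).subtype = 0 := by
        ext x
        exact hc x.1 x.2
      rw [this, TensorProduct.map_zero_left, LinearMap.zero_apply]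
    rw [Coalgebra.rTensor_counit_comul] at hz
    have : a0 = 0 := by
      have := congrArg (TensorProduct.lid k A) hz
      simpa using this
    exact ha0ne this
  obtain ⟨a1, ha1, hε1⟩ := hε
  -- rescale to get counit = 1
  set c : k := Coalgebra.counit (R := k) a1 with hc
  set a : A := c⁻¹ • a1 with ha
  have haMem : a ∈ 𝒜 g := Submodule.smul_mem _ _ ha1
  have hεa : Coalgebra.counit (R := k) a = 1 := by
    rw [ha, map_smul, smul_eq_mul, ← hc, inv_mul_cancel₀ hε1]
  obtain ⟨t, ht⟩ := hcomul g a haMem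
  -- the two linear maps
  let ψ : A → (A ⊗[k] A →ₗ[k] A) := fun w =>
    (LinearMap.mulRight k w) ∘ₗ (LinearMap.mul' k A) ∘ₗ
      (LinearMap.rTensor A (HopfAlgebra.antipode (R := k)))
  have key : ∀ w : A, ψ w (Coalgebra.comul (R := k) a) = w := by
    intro w
    show ((LinearMap.mul' k A) ((HopfAlgebra.antipode (R := k)).rTensor A
        (Coalgebra.comul (R := k) a))) * w = w
    rw [HopfAlgebra.mul_antipode_rTensor_comul_apply, hεa, map_one, one_mul]
  have hcomp : (ψ y) ∘ₗ TensorProduct.map (𝒜 g).subtype (𝒜 g).subtype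
      = (ψ z) ∘ₗ TensorProduct.map (𝒜 g).subtype (𝒜 g).subtype := by
    apply TensorProduct.ext'
    intro x w
    simp only [LinearMap.comp_apply, TensorProduct.map_tmul, Submodule.coe_subtype, ψ,
      LinearMap.rTensor_tmul, LinearMap.mul'_apply, LinearMap.mulRight_apply]
    rw [mul_assoc, mul_assoc, h w.1 w.2]
  calc y = ψ y (Coalgebra.comul (R := k) a) := (key y).symm
    _ = ψ y (TensorProduct.map (𝒜 g).subtype (𝒜 g).subtype t) := by rw [ht]
    _ = ψ z (TensorProduct.map (𝒜 g).subtype (𝒜 g).subtype t) := by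
        rw [← LinearMap.comp_apply, ← LinearMap.comp_apply, hcomp]
    _ = ψ z (Coalgebra.comul (R := k) a) := by rw [ht]
    _ = z := key z
end

section
/- Let T be a central subgroup of a group G with H = G/T. If the natural actions of Aut(H) and Aut(T) on the second cohomology group H²(H, T) (with trivial H-action on T) are trivial, then the natural map Aut_T(G) → Aut(H) × Aut(T) is surjective. -/
/-- A (normalized) 2-cocycle on `H` with values in `M` (trivial action). -/
def IsCocycle {H M : Type*} [Group H] [Group M] (τ : H → H → M) : Prop :=
  (∀ g h l : H, τ g h * τ (g * h) l = τ h l * τ g (h * l)) ∧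
    (∀ g : H, τ 1 g = 1 ∧ τ g 1 = 1)

/-- Two 2-cocycles are cohomologous if they differ by a coboundary. -/
def Cohomologous {H M : Type*} [Group H] [Group M] (τ τ' : H → H → M) : Prop :=
  ∃ μ : H → M, μ 1 = 1 ∧ ∀ g h, τ' g h = μ g * μ h * (μ (g * h))⁻¹ * τ g h

section Aux

variable {G : Type*} [Group G]

open Classical in
/-- A normalized section of the quotient map. -/
noncomputable def extSec (N : Subgroup G) [N.Normal] : (G ⧸ N) → G :=
  fun x => if x = (1 : G ⧸ N) then 1 else Quotient.out x

lemma extSec_one (N : Subgroup G) [N.Normal] : extSec N (1 : G ⧸ N) = 1 := if_pos rfl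

lemma extSec_spec (N : Subgroup G) [N.Normal] (x : G ⧸ N) :
    (QuotientGroup.mk (extSec N x) : G ⧸ N) = x := by
  rcases eq_or_ne x 1 with h | h
  · rw [h, extSec_one]; rfl
  · rw [extSec, if_neg h]
    exact QuotientGroup.out_eq' x

variable {T : Type*} [CommGroup T]

/-- The "T-part" of an element of `G`. -/
noncomputable def extP (ι : T →* G) [ι.range.Normal] : G → T :=
  fun g => Function.invFun ι (g * (extSec ι.range (QuotientGroup.mk g))⁻¹)

/-- The 2-cocycle attached to the section. -/
noncomputable def extTau (ι : T →* G) [ι.range.Normal] :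
    (G ⧸ ι.range) → (G ⧸ ι.range) → T :=
  fun x y =>
    Function.invFun ι (extSec ι.range x * extSec ι.range y * (extSec ι.range (x * y))⁻¹)

variable (ι : T →* G) [ι.range.Normal]

lemma extP_spec (g : G) :
    ι (extP ι g) = g * (extSec ι.range (QuotientGroup.mk g))⁻¹ := by
  have hmem : g * (extSec ι.range (QuotientGroup.mk g))⁻¹ ∈ ι.range := by
    rw [← QuotientGroup.eq_one_iff]
    rw [QuotientGroup.mk_mul, QuotientGroup.mk_inv, extSec_spec, mul_inv_cancel]
  obtain ⟨t, ht⟩ := hmem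
  exact Function.invFun_eq ⟨t, ht⟩

lemma extTau_spec (x y : G ⧸ ι.range) :
    ι (extTau ι x y) = extSec ι.range x * extSec ι.range y * (extSec ι.range (x * y))⁻¹ := by
  have hmem : extSec ι.range x * extSec ι.range y * (extSec ι.range (x * y))⁻¹ ∈ ι.range := by
    rw [← QuotientGroup.eq_one_iff]
    rw [QuotientGroup.mk_mul, QuotientGroup.mk_mul, QuotientGroup.mk_inv,
      extSec_spec, extSec_spec, extSec_spec, mul_inv_cancel]
  obtain ⟨t, ht⟩ := hmem
  exact Function.invFun_eq ⟨t, ht⟩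

lemma extTau_key (x y : G ⧸ ι.range) :
    extSec ι.range x * extSec ι.range y = ι (extTau ι x y) * extSec ι.range (x * y) := by
  rw [extTau_spec]
  group

lemma ext_decomp (g : G) :
    g = ι (extP ι g) * extSec ι.range (QuotientGroup.mk g) := by
  rw [extP_spec]
  group

lemma ext_mk (t : T) (x : G ⧸ ι.range) :
    (QuotientGroup.mk (ι t * extSec ι.range x) : G ⧸ ι.range) = x := by
  have h1 : (QuotientGroup.mk (ι t) : G ⧸ ι.range) = 1 :=
    (QuotientGroup.eq_one_iff _).mpr ⟨t, rfl⟩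
  rw [QuotientGroup.mk_mul, h1, one_mul, extSec_spec]

lemma extP_decomp (hι : Function.Injective ι) (t : T) (x : G ⧸ ι.range) :
    extP ι (ι t * extSec ι.range x) = t := by
  apply hι
  rw [extP_spec, ext_mk]
  group

omit [ι.range.Normal] in
lemma ext_comm (hcent : ι.range ≤ Subgroup.center G) (t : T) (g : G) :
    ι t * g = g * ι t :=
  ((Subgroup.mem_center_iff.mp (hcent ⟨t, rfl⟩)) g).symm

lemma extTau_cocycle (hι : Function.Injective ι) (hcent : ι.range ≤ Subgroup.center G) :
    IsCocycle (extTau ι) := by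
  constructor
  · intro g h l
    apply hι
    rw [map_mul, map_mul]
    have e1 : extSec ι.range g * extSec ι.range h * extSec ι.range l
        = ι (extTau ι g h) * ι (extTau ι (g * h) l) * extSec ι.range (g * h * l) := by
      rw [extTau_key ι g h, mul_assoc (ι (extTau ι g h)), extTau_key ι (g * h) l,
        ← mul_assoc]
    have e2 : extSec ι.range g * (extSec ι.range h * extSec ι.range l)
        = ι (extTau ι h l) * ι (extTau ι g (h * l)) * extSec ι.range (g * (h * l)) := by
      rw [extTau_key ι h l, ← mul_assoc, ← ext_comm ι hcent, mul_assoc,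
        extTau_key ι g (h * l), ← mul_assoc]
    rw [mul_assoc g h l] at e1
    exact mul_right_cancel (e1.symm.trans ((mul_assoc _ _ _).trans e2))
  · intro g
    constructor
    · apply hι
      rw [extTau_spec, map_one, one_mul, extSec_one, one_mul, mul_inv_cancel]
    · apply hι
      rw [extTau_spec, map_one, mul_one, extSec_one, mul_one, mul_inv_cancel]

end Aux


lemma mul_aux1 {T : Type*} [CommGroup T] (a b c a' b' c' t : T) :
    a * b * c⁻¹ * t = a * a'⁻¹ * (b * b'⁻¹) * (c * c'⁻¹)⁻¹ * (a' * b' * c'⁻¹ * t) :=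
  congrArg Additive.toMul (show
    (Additive.ofMul a + Additive.ofMul b + -Additive.ofMul c + Additive.ofMul t)
    = (Additive.ofMul a + -Additive.ofMul a') + (Additive.ofMul b + -Additive.ofMul b')
      + -(Additive.ofMul c + -Additive.ofMul c')
      + (Additive.ofMul a' + Additive.ofMul b' + -Additive.ofMul c' + Additive.ofMul t)
    from by abel)

lemma mul_aux2 {T : Type*} [CommGroup T] (p q mx my mz t : T) :
    p * q * (mx * my * mz⁻¹ * t) * mz = p * mx * (q * my) * t :=
  congrArg Additive.toMul (show
    (Additive.ofMul p + Additive.ofMul q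
      + (Additive.ofMul mx + Additive.ofMul my + -Additive.ofMul mz + Additive.ofMul t)
      + Additive.ofMul mz)
    = Additive.ofMul p + Additive.ofMul mx + (Additive.ofMul q + Additive.ofMul my)
      + Additive.ofMul t
    from by abel)


/-- Let `T` be a central subgroup of `G` (realized by an injective hom `ι : T → G` with
central range) and `H = G/T`. If the natural actions of `Aut(H)` and `Aut(T)` on
`H²(H, T)` (trivial coefficients) are trivial, then the natural map
`Aut_T(G) → Aut(H) × Aut(T)` is surjective: every pair `(θ, u)` is induced by an
automorphism `f` of `G` preserving `T`. -/
theorem autT_to_autQuotient_prod_autT_surjective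
    (G : Type*) [Group G] (T : Type*) [CommGroup T]
    (ι : T →* G) (hι : Function.Injective ι)
    (hcent : ι.range ≤ Subgroup.center G) [ι.range.Normal]
    (hAutH : ∀ τ : (G ⧸ ι.range) → (G ⧸ ι.range) → T, IsCocycle τ →
      ∀ θ : MulAut (G ⧸ ι.range), Cohomologous τ (fun x y => τ (θ x) (θ y)))
    (hAutT : ∀ τ : (G ⧸ ι.range) → (G ⧸ ι.range) → T, IsCocycle τ →
      ∀ u : MulAut T, Cohomologous τ (fun x y => u (τ x y))) :
    ∀ (θ : MulAut (G ⧸ ι.range)) (u : MulAut T),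
      ∃ f : MulAut G,
        (∀ x : G, (QuotientGroup.mk (f x) : G ⧸ ι.range) = θ (QuotientGroup.mk x)) ∧
        (∀ t : T, f (ι t) = ι (u t)) := by
  intro θ u
  have hcoc : IsCocycle (extTau ι) := extTau_cocycle ι hι hcent
  obtain ⟨μ₁, hμ₁1, hμ₁⟩ := hAutH (extTau ι) hcoc θ
  obtain ⟨μ₂, hμ₂1, hμ₂⟩ := hAutT (extTau ι) hcoc u
  set μ : (G ⧸ ι.range) → T := fun x => μ₂ x * (μ₁ x)⁻¹ with hμdef
  have hμ1 : μ 1 = 1 := by simp [hμdef, hμ₁1, hμ₂1]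
  have hrel : ∀ x y, u (extTau ι x y)
      = μ x * μ y * (μ (x * y))⁻¹ * extTau ι (θ x) (θ y) := by
    intro x y
    have h1 := hμ₁ x y
    have h2 := hμ₂ x y
    simp only at h1 h2
    rw [h2, h1]
    simp only [hμdef]
    exact mul_aux1 (μ₂ x) (μ₂ y) (μ₂ (x * y)) (μ₁ x) (μ₁ y) (μ₁ (x * y)) (extTau ι x y)
  set φ : G → G := fun g =>
    ι (u (extP ι g) * μ (QuotientGroup.mk g)) * extSec ι.range (θ (QuotientGroup.mk g))
    with hφdef
  have hφval : ∀ (t : T) (x : G ⧸ ι.range),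
      φ (ι t * extSec ι.range x) = ι (u t * μ x) * extSec ι.range (θ x) := by
    intro t x
    simp only [hφdef]
    rw [ext_mk, extP_decomp ι hι]
  have hmul : ∀ a b : G, φ (a * b) = φ a * φ b := by
    intro a b
    have ha := ext_decomp ι a
    have hb := ext_decomp ι b
    set ta := extP ι a with hta
    set tb := extP ι b with htb
    set x := (QuotientGroup.mk a : G ⧸ ι.range) with hx
    set y := (QuotientGroup.mk b : G ⧸ ι.range) with hy
    have hab : a * b = ι (ta * tb * extTau ι x y) * extSec ι.range (x * y) := by
      rw [map_mul, map_mul]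
      calc a * b = ι ta * extSec ι.range x * (ι tb * extSec ι.range y) := by
            rw [← ha, ← hb]
        _ = ι ta * (ι tb * (extSec ι.range x * extSec ι.range y)) := by
            rw [mul_assoc]
            congr 1
            rw [← mul_assoc, ← ext_comm ι hcent tb, mul_assoc]
        _ = ι ta * (ι tb * (ι (extTau ι x y) * extSec ι.range (x * y))) := by
            rw [extTau_key]
        _ = ι ta * ι tb * ι (extTau ι x y) * extSec ι.range (x * y) := by group
    rw [hab, hφval, ha, hb, hφval, hφval]
    have hθxy : θ (x * y) = θ x * θ y := map_mul θ x y
    rw [hθxy]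
    calc ι (u (ta * tb * extTau ι x y) * μ (x * y)) * extSec ι.range (θ x * θ y)
        = ι (u ta * μ x * (u tb * μ y) * extTau ι (θ x) (θ y))
            * extSec ι.range (θ x * θ y) := by
          congr 1
          refine congrArg ι ?_
          rw [map_mul, map_mul, hrel x y]
          exact mul_aux2 (u ta) (u tb) (μ x) (μ y) (μ (x * y)) (extTau ι (θ x) (θ y))
      _ = ι (u ta * μ x * (u tb * μ y))
            * (ι (extTau ι (θ x) (θ y)) * extSec ι.range (θ x * θ y)) := by
          rw [map_mul]; group
      _ = ι (u ta * μ x * (u tb * μ y)) * (extSec ι.range (θ x) * extSec ι.range (θ y)) := by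
          rw [← extTau_key]
      _ = ι (u ta * μ x) * extSec ι.range (θ x) * (ι (u tb * μ y) * extSec ι.range (θ y)) := by
          rw [map_mul, mul_assoc (ι (u ta * μ x)) (ι (u tb * μ y)),
            mul_assoc (ι (u ta * μ x)) (extSec ι.range (θ x))]
          congr 1
          rw [← mul_assoc, ← mul_assoc, ext_comm ι hcent, mul_assoc]
  set φ₀ : G →* G := MonoidHom.mk' φ hmul with hφ₀def
  have hφmk : ∀ g : G, (QuotientGroup.mk (φ g) : G ⧸ ι.range) = θ (QuotientGroup.mk g) := by
    intro g
    simp only [hφdef]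
    have hone : (QuotientGroup.mk (ι (u (extP ι g) * μ (QuotientGroup.mk g))) : G ⧸ ι.range)
        = 1 := (QuotientGroup.eq_one_iff _).mpr (MonoidHom.mem_range.mpr ⟨_, rfl⟩)
    rw [QuotientGroup.mk_mul, hone, one_mul, extSec_spec]
  have hφι : ∀ t : T, φ (ι t) = ι (u t) := by
    intro t
    have h : ι t = ι t * extSec ι.range 1 := by rw [extSec_one, mul_one]
    rw [h, hφval, map_one θ, extSec_one, hμ1, mul_one, mul_one]
  have hinj : Function.Injective φ₀ := by
    rw [injective_iff_map_eq_one]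
    intro g hg
    have hg' : φ g = 1 := hg
    have h1 : θ (QuotientGroup.mk g) = 1 := by
      rw [← hφmk g, hg', QuotientGroup.mk_one]
    have h2 : (QuotientGroup.mk g : G ⧸ ι.range) = 1 := by
      have := congrArg θ.symm h1
      simpa using this
    have h3 : g = ι (extP ι g) := by
      have := ext_decomp ι g
      rwa [h2, extSec_one, mul_one] at this
    have h4 : φ g = ι (u (extP ι g)) := by
      conv_lhs => rw [h3]
      rw [hφι]
    have h5 : u (extP ι g) = 1 := by
      apply hι
      rw [← h4, hg', map_one]
    have h6 : extP ι g = 1 := by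
      have := congrArg u.symm h5
      simpa using this
    rw [h3, h6, map_one]
  have hsurj : Function.Surjective φ₀ := by
    intro g
    set x := θ.symm (QuotientGroup.mk g) with hxdef
    have hθx : θ x = QuotientGroup.mk g := by rw [hxdef]; simp
    have hmem : g * (φ (extSec ι.range x))⁻¹ ∈ ι.range := by
      rw [← QuotientGroup.eq_one_iff, QuotientGroup.mk_mul, QuotientGroup.mk_inv]
      have h : (QuotientGroup.mk (φ (extSec ι.range x)) : G ⧸ ι.range)
          = QuotientGroup.mk g := by
        rw [hφmk, extSec_spec, hθx]
      rw [h, mul_inv_cancel]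
    obtain ⟨t, ht⟩ := hmem
    refine ⟨ι (u.symm t) * extSec ι.range x, ?_⟩
    show φ (ι (u.symm t) * extSec ι.range x) = g
    rw [hmul, hφι]
    simp only [MulEquiv.apply_symm_apply]
    rw [ht]
    group
  refine ⟨MulEquiv.ofBijective φ₀ ⟨hinj, hsurj⟩, ?_, ?_⟩
  · intro x
    exact hφmk x
  · intro t
    exact hφι t
end

section
/- Let n ≥ 2 be even and ω ∈ k^× with ω^n = 1, where k is a field. The map τ_ω : D_n × D_n → k^× defined by τ_ω(r^i s^j, r^k s^l) = ω^{jk} (for 0 ≤ i,k < n and j,l ∈ {0,1}) is a 2-cocycle on the dihedral group D_n with trivial coefficients. -/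
/-- The map `τ_ω` on the dihedral group `D_n`, given on elements written `r^i s^j` by
`τ_ω(r^i s^j, r^k s^l) = ω^{jk}`. (In terms of the generators `r i` and `sr i = s r^i`
of `DihedralGroup n`, note `r^k s = sr (-k)`.) -/
def tauOmega {K : Type*} [Field K] (n : ℕ) (ω : Kˣ) :
    DihedralGroup n → DihedralGroup n → Kˣ := fun g h =>
  match g, h with
  | DihedralGroup.r _, _ => 1
  | DihedralGroup.sr _, DihedralGroup.r m => ω ^ m.val
  | DihedralGroup.sr _, DihedralGroup.sr m => ω ^ (-m).val

private lemma pow_val_mod {K : Type*} [Field K] {n : ℕ} {ω : Kˣ} (hω : ω ^ n = 1)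
    (k : ℕ) : ω ^ (k % n) = ω ^ k := by
  conv_rhs => rw [← Nat.mod_add_div k n]
  rw [pow_add, pow_mul, hω, one_pow, mul_one]

private lemma pow_val_add {K : Type*} [Field K] {n : ℕ} [NeZero n] {ω : Kˣ}
    (hω : ω ^ n = 1) (a b : ZMod n) :
    ω ^ (a + b).val = ω ^ a.val * ω ^ b.val := by
  rw [ZMod.val_add, pow_val_mod hω, pow_add]

/-- For `n ≥ 2` even and `ω` an `n`-th root of unity, `τ_ω` is a 2-cocycle on `D_n`
with trivial coefficients. -/
theorem tauOmega_isCocycle {K : Type*} [Field K] (n : ℕ) (hn : 2 ≤ n) (heven : Even n)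
    (ω : Kˣ) (hω : ω ^ n = 1) : IsCocycle (tauOmega n ω) := by
  have : NeZero n := ⟨by omega⟩
  have key : ∀ a b : ZMod n, ω ^ (a + b).val = ω ^ a.val * ω ^ b.val := pow_val_add hω
  constructor
  · rintro (i | i) (j | j) (m | m) <;>
      simp only [DihedralGroup.r_mul_r, DihedralGroup.r_mul_sr, DihedralGroup.sr_mul_r,
        DihedralGroup.sr_mul_sr, tauOmega, one_mul, mul_one]
    · rw [key]
    · rw [show (-(m - j) : ZMod n) = j + -m from by ring, key]
    · rw [show (-(j + m) : ZMod n) = -j + -m from by ring, key, mul_left_comm, ← key]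
      simp
    · rw [← key, show (-m + (m - j) : ZMod n) = -j from by ring]
  · rintro (i | i) <;> simp [tauOmega, DihedralGroup.one_def, -DihedralGroup.r_zero]
end

section
/- Let n ≥ 2 be even, k an algebraically closed field of characteristic 0, and ω ∈ k^× with ω^n = 1. The 2-cocycle τ_ω on D_n given by τ_ω(r^i s^j, r^k s^l) = ω^{jk} is a coboundary if and only if ω^{n/2} = 1. -/
/-- A 2-cocycle is a coboundary if it is the differential of some `μ` with `μ(1) = 1`. -/
def IsCoboundary {H M : Type*} [Group H] [Group M] (τ : H → H → M) : Prop :=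
  ∃ μ : H → M, μ 1 = 1 ∧ ∀ g h, τ g h = μ g * μ h * (μ (g * h))⁻¹

open DihedralGroup in
/-- For `n ≥ 2` even, `k` algebraically closed of characteristic `0`, and `ω ∈ kˣ` with
`ω^n = 1`, the 2-cocycle `τ_ω` on `D_n` is a coboundary iff `ω^{n/2} = 1`. -/
theorem tauOmega_isCoboundary_iff {K : Type*} [Field K] [IsAlgClosed K] [CharZero K]
    (n : ℕ) (hn : 2 ≤ n) (heven : Even n) (ω : Kˣ) (hω : ω ^ n = 1) :
    IsCoboundary (tauOmega n ω) ↔ ω ^ (n / 2) = 1 := by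
  haveI : NeZero n := ⟨by omega⟩
  have hdvd : 2 ∣ n := heven.two_dvd
  have h2n : 2 * (n / 2) = n := Nat.mul_div_cancel' hdvd
  constructor
  · rintro ⟨μ, hμ1, hc⟩
    set ρ := μ (r 1) with hρdef
    have hr0 : μ (r (0 : ZMod n)) = 1 := by rw [← one_def]; exact hμ1
    have hstep : ∀ i : ZMod n, μ (r (i + 1)) = μ (r i) * ρ := by
      intro i
      have h := hc (r i) (r 1)
      have ht : tauOmega n ω (r i) (r 1) = 1 := rfl
      rw [ht, r_mul_r, eq_comm, mul_inv_eq_one] at h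
      exact h.symm
    have hA : ∀ j : ℕ, μ (r (j : ZMod n)) = ρ ^ j := by
      intro j
      induction j with
      | zero => simpa using hr0
      | succ j ih =>
        have := hstep (j : ZMod n)
        rw [ih] at this
        rw [Nat.cast_succ, this, pow_succ]
    have hρn : ρ ^ n = 1 := by
      have := hA n
      rw [ZMod.natCast_self, hr0] at this
      exact this.symm
    have hrneg : μ (r (-1)) = ρ⁻¹ := by
      have := hstep (-1)
      rw [neg_add_cancel, hr0] at this
      exact eq_inv_of_mul_eq_one_left this.symm
    have hsr1 : μ (sr 1) = ρ⁻¹ * μ (sr 0) := by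
      have h := hc (r (-1)) (sr 0)
      have ht : tauOmega n ω (r (-1)) (sr 0) = 1 := rfl
      rw [ht, r_mul_sr, zero_sub, neg_neg, eq_comm, mul_inv_eq_one, hrneg] at h
      exact h.symm
    have hωρ : ω = ρ ^ 2 := by
      have h := hc (sr 0) (r 1)
      have ht : tauOmega n ω (sr 0) (r 1) = ω ^ (1 : ZMod n).val := rfl
      haveI : Fact (1 < n) := ⟨by omega⟩
      have hv1 : (1 : ZMod n).val = 1 := ZMod.val_one n
      rw [ht, hv1, pow_one, sr_mul_r, zero_add, hsr1] at h
      rw [h, ← hρdef]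
      exact Units.ext (by push_cast; field_simp)
    rw [hωρ, ← pow_mul, h2n, hρn]
  · intro hhalf
    obtain ⟨z, hz⟩ := IsAlgClosed.exists_pow_nat_eq (ω : K) (n := 2) (by norm_num)
    have hz0 : z ≠ 0 := by
      intro h
      rw [h] at hz
      simp at hz
      exact (Units.ne_zero ω) hz.symm
    set ρ : Kˣ := Units.mk0 z hz0 with hρdef
    have hρ2 : ρ ^ 2 = ω := by
      ext
      push_cast [hρdef]
      exact hz
    have hρn : ρ ^ n = 1 := by
      rw [← h2n, pow_mul, hρ2, hhalf]
    set φ : ZMod n → Kˣ := fun i => ρ ^ i.val with hφdef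
    have φ_add : ∀ i j : ZMod n, φ (i + j) = φ i * φ j := by
      intro i j
      simp only [hφdef]
      rw [ZMod.val_add, ← pow_eq_pow_mod _ hρn, pow_add]
    have φ_zero : φ 0 = 1 := by simp [hφdef]
    have φ_neg : ∀ i : ZMod n, φ (-i) = (φ i)⁻¹ := by
      intro i
      refine eq_inv_of_mul_eq_one_left ?_
      rw [← φ_add, neg_add_cancel, φ_zero]
    have φ_sub : ∀ i j : ZMod n, φ (i - j) = φ i * (φ j)⁻¹ := by
      intro i j
      rw [sub_eq_add_neg, φ_add, φ_neg]
    have hω2 : ∀ m : ZMod n, ω ^ m.val = φ m * φ m := by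
      intro m
      rw [← hρ2, ← pow_mul, two_mul, pow_add]
    refine ⟨fun g => match g with
      | DihedralGroup.r i => φ i
      | DihedralGroup.sr i => (φ i)⁻¹, ?_, ?_⟩
    · show φ 0 = 1
      exact φ_zero
    · rintro (i | i) (j | j)
      · show (1 : Kˣ) = φ i * φ j * (φ (i + j))⁻¹
        rw [φ_add]
        group
      · show (1 : Kˣ) = φ i * (φ j)⁻¹ * ((φ (j - i))⁻¹)⁻¹
        rw [φ_sub]
        group
      · show ω ^ j.val = (φ i)⁻¹ * φ j * ((φ (i + j))⁻¹)⁻¹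
        rw [φ_add, hω2, inv_inv]
        simp [mul_comm, mul_left_comm, mul_assoc]
      · show ω ^ (-j).val = (φ i)⁻¹ * (φ j)⁻¹ * (φ (j - i))⁻¹
        rw [φ_sub, hω2, φ_neg]
        simp [mul_comm, mul_left_comm, mul_assoc]
end

section
/- Let n ≥ 2 be even and k a field. A 2-cocycle β ∈ Z²(D_n, k^×) on the dihedral group D_n (trivial coefficients) is a coboundary if and only if there exist x, y ∈ k^× with x^n = β(r,r)β(r,r²)⋯β(r,r^{n-1}), y² = β(s,s), and x² = β(r,r^{n-1}) β(r^{n-1},s)⁻¹ β(s,r). -/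
open DihedralGroup

namespace DihedralCobAux

variable {K : Type*} [Field K] {n : ℕ}

/-- Partial products used to define the cochain on rotations. -/
def F (β : DihedralGroup n → DihedralGroup n → Kˣ) (x : Kˣ) (m : ℕ) : Kˣ :=
  x ^ m * (∏ j ∈ Finset.range m, β (r 1) (r (j : ZMod n)))⁻¹

/-- The candidate 1-cochain. -/
def Mu (β : DihedralGroup n → DihedralGroup n → Kˣ) (x y : Kˣ) :
    DihedralGroup n → Kˣ
  | DihedralGroup.r i => F β x i.val
  | DihedralGroup.sr i => y * F β x i.val * (β (DihedralGroup.sr 0) (DihedralGroup.r i))⁻¹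

theorem rev (n : ℕ) (hn : 2 ≤ n)
    (β : DihedralGroup n → DihedralGroup n → Kˣ)
    (hcoc : ∀ g h l, β g h * β (g * h) l = β h l * β g (h * l))
    (hnorm : ∀ g, β 1 g = 1 ∧ β g 1 = 1)
    (x y : Kˣ)
    (hx : x ^ n = ∏ i ∈ Finset.Icc 1 (n - 1), β (r 1) (r (i : ZMod n)))
    (hy : y ^ 2 = β (sr 0) (sr 0))
    (hxy : x ^ 2 = β (r 1) (r (-1)) * (β (r (-1)) (sr 0))⁻¹ * β (sr 0) (r 1)) :
    IsCoboundary β := by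
  haveI : NeZero n := ⟨by omega⟩
  haveI : Fact (1 < n) := ⟨hn⟩
  set f : ℕ → Kˣ := F β x with hfdef
  set μ : DihedralGroup n → Kˣ := Mu β x y with hμdef
  have hvi : ∀ i : ZMod n, ((i.val : ℕ) : ZMod n) = i := fun i => ZMod.natCast_rightInverse i
  have hr0 : (r 0 : DihedralGroup n) = 1 := one_def.symm
  have hb10 : β (r 1) (r ((0 : ℕ) : ZMod n)) = 1 := by
    rw [Nat.cast_zero, hr0]; exact (hnorm _).2
  have hb10' : β (r 1) (r (0 : ZMod n)) = 1 := by rw [hr0]; exact (hnorm _).2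
  have hf0 : f 0 = 1 := by simp [hfdef, F]
  have hfs : ∀ m : ℕ, β (r 1) (r (m : ZMod n)) * f (m + 1) = x * f m := by
    intro m
    rw [hfdef]
    simp only [F, Finset.prod_range_succ, pow_succ]
    rw [Units.ext_iff]
    have hb : ((β (r 1) (r (m : ZMod n)) : Kˣ) : K) ≠ 0 := Units.ne_zero _
    have hP : (∏ j ∈ Finset.range m, ((β (r 1) (r (j : ZMod n)) : Kˣ) : K)) ≠ 0 :=
      Finset.prod_ne_zero_iff.mpr fun j _ => Units.ne_zero _
    push_cast
    field_simp
  have hfn : f n = 1 := by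
    have hset : Finset.range n = insert 0 (Finset.Icc 1 (n - 1)) := by
      ext a; simp; omega
    rw [hfdef]
    simp only [F, hset, Finset.prod_insert (by simp : (0 : ℕ) ∉ Finset.Icc 1 (n - 1)),
      Nat.cast_zero, hb10', one_mul, ← hx]
    simp [hb10']
  have hf1 : f 1 = x := by
    rw [hfdef]; simp [F, Finset.prod_range_one, hb10']; exact (hnorm _).2
  have hμr : ∀ i : ZMod n, μ (r i) = f i.val := fun i => rfl
  have hμs : ∀ i : ZMod n, μ (sr i) = y * f i.val * (β (sr 0) (r i))⁻¹ := fun i => rfl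
  have hμ1 : μ 1 = 1 := by rw [← hr0, hμr, ZMod.val_zero, hf0]
  have hμr1 : μ (r 1) = x := by rw [hμr, ZMod.val_one, hf1]
  have hμs0 : μ (sr 0) = y := by
    have h0 : β (sr 0) (r 0) = 1 := by rw [hr0]; exact (hnorm _).2
    rw [hμs, ZMod.val_zero, hf0, h0]; simp
  -- S1 : the construction equation on rotations
  have S1 : ∀ i : ZMod n, β (r 1) (r i) * μ (r (1 + i)) = μ (r 1) * μ (r i) := by
    intro i
    rw [hμr (1 + i), hμr i, hμr1]
    rcases Nat.lt_or_ge (i.val + 1) n with hlt | hge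
    · have h1i : (1 + i : ZMod n) = ((i.val + 1 : ℕ) : ZMod n) := by
        rw [Nat.cast_add, Nat.cast_one, hvi i, add_comm]
      rw [h1i, ZMod.val_cast_of_lt hlt]
      have e := hfs i.val
      rwa [hvi i] at e
    · have hn1 : i.val + 1 = n := by have := ZMod.val_lt i; omega
      have h1i : (1 + i : ZMod n) = 0 := by
        rw [← hvi i, ← Nat.cast_one, ← Nat.cast_add, Nat.add_comm, hn1, ZMod.natCast_self]
      rw [h1i, ZMod.val_zero, hf0]
      have e := hfs i.val
      rw [hvi i, hn1, hfn] at e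
      exact e
  -- S3 : the construction equation on reflections
  have S3 : ∀ i : ZMod n, β (sr 0) (r i) * μ (sr i) = μ (sr 0) * μ (r i) := by
    intro i
    rw [hμs i, hμs0, hμr i]
    rw [Units.ext_iff]
    simp only [Units.val_mul, Units.val_inv_eq_inv_val]
    field_simp
  -- pass to the field K
  have C : ∀ g h l, ((β g h : Kˣ) : K) * ((β (g * h) l : Kˣ) : K)
      = ((β h l : Kˣ) : K) * ((β g (h * l) : Kˣ) : K) := by
    intro g h l; exact_mod_cast congrArg Units.val (hcoc g h l)
  have K1 : ∀ i : ZMod n, ((β (r 1) (r i) : Kˣ) : K) * ((μ (r (1 + i)) : Kˣ) : K)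
      = ((μ (r 1) : Kˣ) : K) * ((μ (r i) : Kˣ) : K) := by
    intro i; exact_mod_cast congrArg Units.val (S1 i)
  have K3 : ∀ i : ZMod n, ((β (sr 0) (r i) : Kˣ) : K) * ((μ (sr i) : Kˣ) : K)
      = ((μ (sr 0) : Kˣ) : K) * ((μ (r i) : Kˣ) : K) := by
    intro i; exact_mod_cast congrArg Units.val (S3 i)
  have hμ1K : ((μ 1 : Kˣ) : K) = 1 := by rw [hμ1]; rfl
  have hμr1K : ((μ (r 1) : Kˣ) : K) = (x : K) := by rw [hμr1]
  have hμs0K : ((μ (sr 0) : Kˣ) : K) = (y : K) := by rw [hμs0]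
  -- (r, r) case
  have K2 : ∀ i j : ZMod n, ((β (r i) (r j) : Kˣ) : K) * ((μ (r (i + j)) : Kˣ) : K)
      = ((μ (r i) : Kˣ) : K) * ((μ (r j) : Kˣ) : K) := by
    have main : ∀ m : ℕ, ∀ j : ZMod n,
        ((β (r (m : ZMod n)) (r j) : Kˣ) : K) * ((μ (r ((m : ZMod n) + j)) : Kˣ) : K)
        = ((μ (r (m : ZMod n)) : Kˣ) : K) * ((μ (r j) : Kˣ) : K) := by
      intro m
      induction m with
      | zero =>
        intro j
        rw [Nat.cast_zero, zero_add, hr0, (hnorm (r j)).1, hμ1]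
      | succ m ih =>
        intro j
        have hc : ((m + 1 : ℕ) : ZMod n) = 1 + (m : ZMod n) := by push_cast; ring
        rw [hc]
        have e := C (r 1) (r (m : ZMod n)) (r j)
        rw [r_mul_r, r_mul_r] at e
        have k1 := K1 (m : ZMod n)
        have k2 := ih j
        have k3 := K1 ((m : ZMod n) + j)
        rw [show (1 : ZMod n) + ((m : ZMod n) + j) = 1 + (m : ZMod n) + j by ring] at k3
        apply mul_left_cancel₀ (Units.ne_zero (β (r 1) (r (m : ZMod n))) :
          ((β (r 1) (r (m : ZMod n)) : Kˣ) : K) ≠ 0)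
        linear_combination ((μ (r (1 + (m : ZMod n) + j)) : Kˣ) : K) * e
          + ((β (r (m : ZMod n)) (r j) : Kˣ) : K) * k3
          + ((μ (r 1) : Kˣ) : K) * k2 - ((μ (r j) : Kˣ) : K) * k1
    intro i j
    have h := main i.val j
    rwa [hvi i] at h
  -- (sr, r) case
  have K4 : ∀ i j : ZMod n, ((β (sr i) (r j) : Kˣ) : K) * ((μ (sr (i + j)) : Kˣ) : K)
      = ((μ (sr i) : Kˣ) : K) * ((μ (r j) : Kˣ) : K) := by
    intro i j
    have e := C (sr 0) (r i) (r j)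
    rw [sr_mul_r, r_mul_r, show (0 : ZMod n) + i = i by ring] at e
    have k1 := K3 i
    have k2 := K2 i j
    have k3 := K3 (i + j)
    apply mul_left_cancel₀ (Units.ne_zero (β (sr 0) (r i)) :
      ((β (sr 0) (r i) : Kˣ) : K) ≠ 0)
    linear_combination ((μ (sr (i + j)) : Kˣ) : K) * e
      + ((β (r i) (r j) : Kˣ) : K) * k3
      + ((μ (sr 0) : Kˣ) : K) * k2 - ((μ (r j) : Kˣ) : K) * k1
  -- β(sr 0, sr 0)
  have K5 : ((β (sr 0) (sr 0) : Kˣ) : K) = ((μ (sr 0) : Kˣ) : K) * ((μ (sr 0) : Kˣ) : K) := by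
    have h : (β (sr 0) (sr 0) : Kˣ) = μ (sr 0) * μ (sr 0) := by
      rw [hμs0, ← hy]; exact (sq y).symm ▸ rfl
    exact_mod_cast congrArg Units.val h
  -- β(r (-1), sr 0) from the x² condition
  have K6 : ((β (r (-1)) (sr 0) : Kˣ) : K) * ((μ (sr 1) : Kˣ) : K)
      = ((μ (r (-1)) : Kˣ) : K) * ((μ (sr 0) : Kˣ) : K) := by
    have e' : x ^ 2 * β (r (-1)) (sr 0) = β (r 1) (r (-1)) * β (sr 0) (r 1) := by
      rw [hxy, Units.ext_iff]
      simp only [Units.val_mul, Units.val_pow_eq_pow_val, Units.val_inv_eq_inv_val]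
      field_simp
    have e : (x : K) ^ 2 * ((β (r (-1)) (sr 0) : Kˣ) : K)
        = ((β (r 1) (r (-1)) : Kˣ) : K) * ((β (sr 0) (r 1) : Kˣ) : K) := by
      exact_mod_cast congrArg Units.val e'
    have k1 := K1 (-1)
    rw [show (1 : ZMod n) + (-1) = 0 by ring, hr0, hμ1K, mul_one, hμr1K] at k1
    have k2 := K3 1
    rw [hμr1K] at k2
    apply mul_left_cancel₀ (pow_ne_zero 2 (Units.ne_zero x))
    linear_combination ((μ (sr 1) : Kˣ) : K) * e
      + ((β (r 1) (r (-1)) : Kˣ) : K) * k2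
      + (x : K) * ((μ (sr 0) : Kˣ) : K) * k1
  -- (sr 0, sr j)
  have K7 : ∀ j : ZMod n, ((β (sr 0) (sr j) : Kˣ) : K) * ((μ (r j) : Kˣ) : K)
      = ((μ (sr 0) : Kˣ) : K) * ((μ (sr j) : Kˣ) : K) := by
    intro j
    have e := C (sr 0) (sr 0) (sr j)
    rw [sr_mul_sr, sr_mul_sr, sub_self, sub_zero, hr0, (hnorm (sr j)).1] at e
    rw [Units.val_one, mul_one] at e
    have k3 := K3 j
    apply mul_left_cancel₀ (Units.ne_zero (β (sr 0) (r j)) :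
      ((β (sr 0) (r j) : Kˣ) : K) ≠ 0)
    linear_combination (-((μ (r j) : Kˣ) : K)) * e + ((μ (r j) : Kˣ) : K) * K5
      - ((μ (sr 0) : Kˣ) : K) * k3
  -- (sr 1, sr m)
  have KV : ∀ m : ZMod n, ((β (sr 1) (sr m) : Kˣ) : K) * ((μ (r (m - 1)) : Kˣ) : K)
      = ((μ (sr 1) : Kˣ) : K) * ((μ (sr m) : Kˣ) : K) := by
    intro m
    have e := C (r (-1)) (sr 0) (sr m)
    rw [r_mul_sr, sr_mul_sr, show (0 : ZMod n) - (-1) = 1 by ring,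
      show m - 0 = m by ring] at e
    have k1 := K6
    have k2 := K7 m
    have k3 := K2 (-1) m
    rw [show (-1 : ZMod n) + m = m - 1 by ring] at k3
    apply mul_left_cancel₀ (mul_ne_zero
      (Units.ne_zero (β (r (-1)) (sr 0)) : ((β (r (-1)) (sr 0) : Kˣ) : K) ≠ 0)
      (Units.ne_zero (μ (r m)) : ((μ (r m) : Kˣ) : K) ≠ 0))
    linear_combination ((μ (r (m - 1)) : Kˣ) : K) * ((μ (r m) : Kˣ) : K) * e
      + ((μ (r (m - 1)) : Kˣ) : K) * ((β (r (-1)) (r m) : Kˣ) : K) * k2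
      + ((μ (sr 0) : Kˣ) : K) * ((μ (sr m) : Kˣ) : K) * k3
      - ((μ (r m) : Kˣ) : K) * ((μ (sr m) : Kˣ) : K) * k1
  -- (r 1, sr m)
  have KU : ∀ m : ZMod n, ((β (r 1) (sr m) : Kˣ) : K) * ((μ (sr (m - 1)) : Kˣ) : K)
      = ((μ (r 1) : Kˣ) : K) * ((μ (sr m) : Kˣ) : K) := by
    intro m
    have e := C (sr 0) (r 1) (sr m)
    rw [sr_mul_r, r_mul_sr, show (0 : ZMod n) + 1 = 1 by ring] at e
    have k1 := K3 1
    have k2 := KV m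
    have k3 := K7 (m - 1)
    apply mul_left_cancel₀ (mul_ne_zero
      (Units.ne_zero (μ (sr 0)) : ((μ (sr 0) : Kˣ) : K) ≠ 0)
      (Units.ne_zero (μ (sr (m - 1))) : ((μ (sr (m - 1)) : Kˣ) : K) ≠ 0))
    linear_combination (-(((β (r 1) (sr m) : Kˣ) : K) * ((μ (sr (m - 1)) : Kˣ) : K))) * k3
      - (((μ (r (m - 1)) : Kˣ) : K) * ((μ (sr (m - 1)) : Kˣ) : K)) * e
      + (((μ (sr (m - 1)) : Kˣ) : K) * ((β (sr 0) (r 1) : Kˣ) : K)) * k2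
      + (((μ (sr (m - 1)) : Kˣ) : K) * ((μ (sr m) : Kˣ) : K)) * k1
  -- (r i, sr j) case
  have K8 : ∀ i j : ZMod n, ((β (r i) (sr j) : Kˣ) : K) * ((μ (sr (j - i)) : Kˣ) : K)
      = ((μ (r i) : Kˣ) : K) * ((μ (sr j) : Kˣ) : K) := by
    have main : ∀ m : ℕ, ∀ j : ZMod n,
        ((β (r (m : ZMod n)) (sr j) : Kˣ) : K) * ((μ (sr (j - (m : ZMod n))) : Kˣ) : K)
        = ((μ (r (m : ZMod n)) : Kˣ) : K) * ((μ (sr j) : Kˣ) : K) := by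
      intro m
      induction m with
      | zero =>
        intro j
        rw [Nat.cast_zero, sub_zero, hr0, (hnorm (sr j)).1, hμ1]
      | succ m ih =>
        intro j
        have hc : ((m + 1 : ℕ) : ZMod n) = 1 + (m : ZMod n) := by push_cast; ring
        rw [hc, show j - (1 + (m : ZMod n)) = j - (m : ZMod n) - 1 by ring]
        have e := C (r 1) (r (m : ZMod n)) (sr j)
        rw [r_mul_r, r_mul_sr] at e
        have k1 := K1 (m : ZMod n)
        have k2 := ih j
        have k3 := KU (j - (m : ZMod n))
        apply mul_left_cancel₀ (mul_ne_zero
          (Units.ne_zero (β (r 1) (r (m : ZMod n))) :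
            ((β (r 1) (r (m : ZMod n)) : Kˣ) : K) ≠ 0)
          (Units.ne_zero (μ (sr (j - (m : ZMod n)))) :
            ((μ (sr (j - (m : ZMod n))) : Kˣ) : K) ≠ 0))
        linear_combination (((μ (sr (j - (m : ZMod n))) : Kˣ) : K)
            * ((μ (sr (j - (m : ZMod n) - 1)) : Kˣ) : K)) * e
          + (((β (r 1) (sr (j - (m : ZMod n))) : Kˣ) : K)
            * ((μ (sr (j - (m : ZMod n) - 1)) : Kˣ) : K)) * k2
          + (((μ (sr j) : Kˣ) : K) * ((μ (r (m : ZMod n)) : Kˣ) : K)) * k3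
          - (((μ (sr j) : Kˣ) : K) * ((μ (sr (j - (m : ZMod n))) : Kˣ) : K)) * k1
    intro i j
    have h := main i.val j
    rwa [hvi i] at h
  -- (sr i, sr j) case
  have K9 : ∀ i j : ZMod n, ((β (sr i) (sr j) : Kˣ) : K) * ((μ (r (j - i)) : Kˣ) : K)
      = ((μ (sr i) : Kˣ) : K) * ((μ (sr j) : Kˣ) : K) := by
    intro i j
    have e := C (sr 0) (r i) (sr j)
    rw [sr_mul_r, r_mul_sr, show (0 : ZMod n) + i = i by ring] at e
    have k1 := K3 i
    have k2 := K8 i j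
    have k3 := K7 (j - i)
    apply mul_left_cancel₀ (mul_ne_zero
      (Units.ne_zero (β (sr 0) (r i)) : ((β (sr 0) (r i) : Kˣ) : K) ≠ 0)
      (Units.ne_zero (μ (sr (j - i))) : ((μ (sr (j - i)) : Kˣ) : K) ≠ 0))
    linear_combination (((μ (r (j - i)) : Kˣ) : K) * ((μ (sr (j - i)) : Kˣ) : K)) * e
      + (((β (r i) (sr j) : Kˣ) : K) * ((μ (sr (j - i)) : Kˣ) : K)) * k3
      + (((μ (sr 0) : Kˣ) : K) * ((μ (sr (j - i)) : Kˣ) : K)) * k2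
      - (((μ (sr (j - i)) : Kˣ) : K) * ((μ (sr j) : Kˣ) : K)) * k1
  -- assemble
  have key : ∀ g h, ((β g h : Kˣ) : K) * ((μ (g * h) : Kˣ) : K)
      = ((μ g : Kˣ) : K) * ((μ h : Kˣ) : K) := by
    intro g h
    cases g with
    | r i =>
      cases h with
      | r j => rw [r_mul_r]; exact K2 i j
      | sr j => rw [r_mul_sr]; exact K8 i j
    | sr i =>
      cases h with
      | r j => rw [sr_mul_r]; exact K4 i j
      | sr j => rw [sr_mul_sr]; exact K9 i j
  refine ⟨μ, hμ1, ?_⟩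
  intro g h
  rw [Units.ext_iff]
  simp only [Units.val_mul, Units.val_inv_eq_inv_val]
  have hz : ((μ (g * h) : Kˣ) : K) ≠ 0 := Units.ne_zero _
  field_simp
  linear_combination key g h

end DihedralCobAux

/-- Triviality test for 2-cocycles on the dihedral group `D_n` (`n` even): a normalized
2-cocycle `β` with values in `kˣ` is a coboundary iff there exist `x, y ∈ kˣ` with
`x^n = β(r,r)β(r,r²)⋯β(r,r^{n-1})`, `y² = β(s,s)` and
`x² = β(r,r^{n-1}) β(r^{n-1},s)⁻¹ β(s,r)`. -/
theorem dihedral_cocycle_coboundary_iff {K : Type*} [Field K]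
    (n : ℕ) (hn : 2 ≤ n) (heven : Even n)
    (β : DihedralGroup n → DihedralGroup n → Kˣ) (hβ : IsCocycle β) :
    IsCoboundary β ↔
      ∃ x y : Kˣ,
        x ^ n = ∏ i ∈ Finset.Icc 1 (n - 1), β (r 1) (r (i : ZMod n)) ∧
        y ^ 2 = β (sr 0) (sr 0) ∧
        x ^ 2 = β (r 1) (r (-1)) * (β (r (-1)) (sr 0))⁻¹ * β (sr 0) (r 1) := by
  obtain ⟨hcoc, hnorm⟩ := hβ
  haveI : NeZero n := ⟨by omega⟩
  constructor
  · rintro ⟨μ, hμ1, hμ⟩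
    refine ⟨μ (r 1), μ (sr 0), ?_, ?_, ?_⟩
    · have tele : ∀ m : ℕ, ∏ i ∈ Finset.Icc 1 m, β (r 1) (r (i : ZMod n)) =
          μ (r 1) ^ m * μ (r 1) * (μ (r ((m + 1 : ℕ) : ZMod n)))⁻¹ := by
        intro m
        induction m with
        | zero => simp
        | succ m ih =>
          rw [Finset.prod_Icc_succ_top (by omega : 1 ≤ m + 1), ih,
            hμ (r 1) (r ((m + 1 : ℕ) : ZMod n)), r_mul_r,
            show (1 : ZMod n) + ((m + 1 : ℕ) : ZMod n) = ((m + 1 + 1 : ℕ) : ZMod n) by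
              push_cast; ring]
          rw [Units.ext_iff]
          simp only [Units.val_mul, Units.val_pow_eq_pow_val, Units.val_inv_eq_inv_val]
          field_simp
          ring
      have h1 : ((n - 1 + 1 : ℕ) : ZMod n) = 0 := by
        rw [show n - 1 + 1 = n from by omega]; exact ZMod.natCast_self n
      rw [tele (n - 1), h1, ← one_def, hμ1, inv_one, mul_one, ← pow_succ,
        show n - 1 + 1 = n from by omega]
    · rw [hμ (sr 0) (sr 0), sr_mul_sr, sub_self, ← one_def, hμ1, inv_one, mul_one, sq]
    · rw [hμ (r 1) (r (-1)), hμ (r (-1)) (sr 0), hμ (sr 0) (r 1), r_mul_r, r_mul_sr,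
        sr_mul_r, show (1 : ZMod n) + (-1) = 0 by ring, show (0 : ZMod n) - (-1) = 1 by ring,
        show (0 : ZMod n) + 1 = 1 by ring, ← one_def, hμ1, inv_one, mul_one]
      rw [Units.ext_iff]
      simp only [Units.val_mul, Units.val_pow_eq_pow_val, Units.val_inv_eq_inv_val]
      field_simp
  · rintro ⟨x, y, hx, hy, hxy⟩
    exact DihedralCobAux.rev n hn β hcoc hnorm x y hx hy hxy
end

section
/- Let n = p^r q^s with p, q distinct odd primes and r, s ≥ 1. Then the automorphism group Aut(D_n) of the dihedral group of order 2n has exactly 3 conjugacy classes of elements of order 2. -/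
open DihedralGroup

namespace DihedralAutAux

variable {n : ℕ}

/-- The automorphism of `DihedralGroup n` sending `r i ↦ r (l*i)`, `sr i ↦ sr (k + l*i)`. -/
def ψ (k : ZMod n) (l : (ZMod n)ˣ) : MulAut (DihedralGroup n) where
  toFun x := match x with
    | .r i => .r (l * i)
    | .sr i => .sr (k + l * i)
  invFun x := match x with
    | .r i => .r ((l⁻¹ : (ZMod n)ˣ) * i)
    | .sr i => .sr ((l⁻¹ : (ZMod n)ˣ) * (i - k))
  left_inv := by
    rintro (i | i) <;> simp [mul_sub, ← mul_assoc]
  right_inv := by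
    rintro (i | i) <;> simp [mul_sub, ← mul_assoc]
  map_mul' := by
    rintro (i | i) (j | j) <;>
      simp [r_mul_r, r_mul_sr, sr_mul_r, sr_mul_sr, mul_add, mul_sub] <;> ring

@[simp] lemma ψ_apply_r (k : ZMod n) (l : (ZMod n)ˣ) (i : ZMod n) :
    ψ k l (.r i) = .r (l * i) := rfl

@[simp] lemma ψ_apply_sr (k : ZMod n) (l : (ZMod n)ˣ) (i : ZMod n) :
    ψ k l (.sr i) = .sr (k + l * i) := rfl

lemma ψ_mul (k k' : ZMod n) (l l' : (ZMod n)ˣ) :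
    ψ k l * ψ k' l' = ψ (k + (l : ZMod n) * k') (l * l') := by
  ext x
  rcases x with i | i <;>
    simp [MulAut.mul_apply, Units.val_mul, mul_add, mul_assoc, add_assoc]

lemma ψ_one : (ψ 0 1 : MulAut (DihedralGroup n)) = 1 := by
  ext x; rcases x with i | i <;> simp

lemma ψ_inj {k k' : ZMod n} {l l' : (ZMod n)ˣ} (h : ψ k l = ψ k' l') :
    k = k' ∧ l = l' := by
  have h1 := congrArg (fun f : MulAut (DihedralGroup n) => f (.sr 0)) h
  have h2 := congrArg (fun f : MulAut (DihedralGroup n) => f (.r 1)) h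
  simp only [ψ_apply_sr, ψ_apply_r, mul_zero, add_zero, mul_one] at h1 h2
  exact ⟨by simpa using h1, Units.ext (by simpa using h2)⟩

lemma r_pow [NeZero n] (a : ZMod n) (j : ℕ) :
    (DihedralGroup.r a : DihedralGroup n) ^ j = .r (a * j) := by
  have h1 : (DihedralGroup.r a : DihedralGroup n) = .r 1 ^ a.val := by
    rw [r_one_pow]
    simp [ZMod.natCast_val, ZMod.cast_id]
  rw [h1, ← pow_mul, r_one_pow]
  congr 1
  simp [ZMod.natCast_val, ZMod.cast_id]

lemma exists_sr_eq (hodd : Odd n) (f : MulAut (DihedralGroup n)) :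
    ∃ k : ZMod n, f (.sr 0) = .sr k := by
  have hNZ : NeZero n := ⟨by rintro rfl; simp [Nat.odd_iff] at hodd⟩
  have h2 : orderOf (f (.sr 0)) = 2 := by
    have := orderOf_injective f.toMonoidHom f.injective (DihedralGroup.sr 0)
    simpa [orderOf_sr] using this
  rcases hx : f (.sr 0) with j | j
  · exfalso
    rw [hx, orderOf_r] at h2
    have : (n / Nat.gcd n j.val) ∣ n := Nat.div_dvd_of_dvd (Nat.gcd_dvd_left n _)
    rw [h2] at this
    rw [Nat.odd_iff] at hodd
    omega
  · exact ⟨j, rfl⟩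

lemma exists_r_eq (hodd : Odd n) (f : MulAut (DihedralGroup n)) :
    ∃ l : ZMod n, f (.r 1) = .r l := by
  have hNZ : NeZero n := ⟨by rintro rfl; simp [Nat.odd_iff] at hodd⟩
  have h2 : orderOf (f (.r 1)) = n := by
    have := orderOf_injective f.toMonoidHom f.injective (DihedralGroup.r 1)
    simpa [orderOf_r_one] using this
  rcases hx : f (.r 1) with j | j
  · exact ⟨j, rfl⟩
  · exfalso
    rw [hx, orderOf_sr] at h2
    rw [Nat.odd_iff] at hodd
    omega

lemma exists_psi (hodd : Odd n) (g : MulAut (DihedralGroup n)) :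
    ∃ (k : ZMod n) (l : (ZMod n)ˣ), g = ψ k l := by
  have hNZ : NeZero n := ⟨by rintro rfl; simp [Nat.odd_iff] at hodd⟩
  obtain ⟨k, hk⟩ := exists_sr_eq hodd g
  obtain ⟨l, hl⟩ := exists_r_eq hodd g
  obtain ⟨m, hm⟩ := exists_r_eq hodd g⁻¹
  have hr_pow : ∀ (a : ZMod n), g (.r a) = .r (l * a) := by
    intro a
    have h1 : (DihedralGroup.r a : DihedralGroup n) = .r 1 ^ a.val := by
      rw [r_one_pow]; simp [ZMod.natCast_val, ZMod.cast_id]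
    rw [h1, map_pow, hl, r_pow]
    congr 1
    simp [ZMod.natCast_val, ZMod.cast_id]
  have hml : l * m = 1 := by
    have h1 : g ((g⁻¹ : MulAut (DihedralGroup n)) (.r 1)) = .r 1 := by
      simp
    rw [hm, hr_pow] at h1
    simpa using h1
  have hsr : ∀ i : ZMod n, g (.sr i) = .sr (k + l * i) := by
    intro i
    have h1 : (DihedralGroup.sr i : DihedralGroup n) = .sr 0 * .r i := by
      rw [sr_mul_r, zero_add]
    rw [h1, map_mul, hk, hr_pow, sr_mul_r]
  refine ⟨k, ⟨l, m, hml, by rw [mul_comm]; exact hml⟩, ?_⟩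
  ext x
  rcases x with i | i
  · exact hr_pow i
  · exact hsr i

lemma isConj_psi {k k' : ZMod n} {l : (ZMod n)ˣ} (t : (ZMod n)ˣ) (m : ZMod n)
    (h : m + (t : ZMod n) * k = k' + (l : ZMod n) * m) : IsConj (ψ k l) (ψ k' l) := by
  rw [isConj_iff]
  refine ⟨ψ m t, ?_⟩
  rw [mul_inv_eq_iff_eq_mul, ψ_mul, ψ_mul, h, mul_comm t l]

lemma units_eq_of_isConj (hodd : Odd n) {k k' : ZMod n} {l l' : (ZMod n)ˣ}
    (h : IsConj (ψ k l) (ψ k' l')) : l = l' := by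
  obtain ⟨c, hc⟩ := isConj_iff.mp h
  obtain ⟨m, t, rfl⟩ := exists_psi hodd c
  rw [mul_inv_eq_iff_eq_mul, ψ_mul, ψ_mul] at hc
  have h2 := (ψ_inj hc).2
  rw [mul_comm l' t] at h2
  exact mul_left_cancel h2

lemma orderOf_psi_eq_two {l : (ZMod n)ˣ} (h1 : l * l = 1) (h2 : l ≠ 1) :
    orderOf (ψ (0 : ZMod n) l) = 2 := by
  refine orderOf_eq_prime ?_ ?_
  · rw [pow_two, ψ_mul, mul_zero, add_zero, h1, ψ_one]
  · intro hcon
    exact h2 (ψ_inj (hcon.trans ψ_one.symm)).2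

lemma neg_one_ne_one' {m : ℕ} (hm : Odd m) (h1 : 1 < m) : (-1 : ZMod m) ≠ 1 := by
  intro h
  have h2 : ((2 : ℕ) : ZMod m) = 0 := by
    linear_combination -h
  rw [ZMod.natCast_eq_zero_iff] at h2
  have := Nat.le_of_dvd two_pos h2
  rw [Nat.odd_iff] at hm
  omega

lemma sq_eq_one_cases {p : ℕ} (hp : p.Prime) (hodd : Odd p) {r : ℕ}
    (x : ZMod (p ^ r)) (hx : x * x = 1) : x = 1 ∨ x = -1 := by
  have hNZ : NeZero (p ^ r) := ⟨pow_ne_zero _ hp.pos.ne'⟩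
  set a : ℤ := (x.val : ℤ) with ha
  have hxa : ((a : ℤ) : ZMod (p ^ r)) = x := by
    simp [ha, ZMod.natCast_val, ZMod.cast_id]
  have hdvd : ((p : ℤ) ^ r) ∣ (a - 1) * (a + 1) := by
    have h0 : (((a - 1) * (a + 1) : ℤ) : ZMod (p ^ r)) = 0 := by
      push_cast
      rw [hxa]
      linear_combination hx
    rw [ZMod.intCast_zmod_eq_zero_iff_dvd] at h0
    exact_mod_cast h0
  have hpZ : Prime (p : ℤ) := by
    rw [Int.prime_iff_natAbs_prime]
    simpa using hp
  have hnot : ¬ ((p : ℤ) ∣ (a - 1) ∧ (p : ℤ) ∣ (a + 1)) := by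
    rintro ⟨h1, h2⟩
    have h3 : (p : ℤ) ∣ 2 := by
      have := dvd_sub h2 h1
      simpa using this
    have h4 : p ∣ 2 := by exact_mod_cast h3
    have h5 : p = 2 := (Nat.prime_dvd_prime_iff_eq hp Nat.prime_two).mp h4
    rw [Nat.odd_iff, h5] at hodd
    omega
  by_cases hd : (p : ℤ) ∣ (a - 1)
  · -- then p does not divide a + 1, so p^r ∣ a - 1
    have hnd : ¬ (p : ℤ) ∣ (a + 1) := fun h => hnot ⟨hd, h⟩
    have hcop : IsCoprime ((p : ℤ) ^ r) (a + 1) :=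
      (hpZ.coprime_iff_not_dvd.mpr hnd).pow_left
    have := hcop.dvd_of_dvd_mul_right hdvd
    left
    have h0 : ((a - 1 : ℤ) : ZMod (p ^ r)) = 0 := by
      rw [ZMod.intCast_zmod_eq_zero_iff_dvd]
      exact_mod_cast this
    push_cast at h0
    rw [hxa] at h0
    linear_combination h0
  · have hcop : IsCoprime ((p : ℤ) ^ r) (a - 1) :=
      (hpZ.coprime_iff_not_dvd.mpr hd).pow_left
    have := hcop.dvd_of_dvd_mul_left hdvd
    right
    have h0 : ((a + 1 : ℤ) : ZMod (p ^ r)) = 0 := by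
      rw [ZMod.intCast_zmod_eq_zero_iff_dvd]
      exact_mod_cast this
    push_cast at h0
    rw [hxa] at h0
    linear_combination h0

end DihedralAutAux

open DihedralAutAux

/-- For `n = p^r q^s` with `p, q` distinct odd primes and `r, s ≥ 1`, the automorphism
group of the dihedral group `D_n` of order `2n` has exactly `3` conjugacy classes of
elements of order `2`. -/
theorem dihedral_two_primePow_aut_three_involution_classes
    (p q r s : ℕ) (hp : p.Prime) (hq : q.Prime) (hpq : p ≠ q)
    (hpodd : Odd p) (hqodd : Odd q) (hr : 1 ≤ r) (hs : 1 ≤ s) :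
    ∃ f₁ f₂ f₃ : MulAut (DihedralGroup (p ^ r * q ^ s)),
      orderOf f₁ = 2 ∧ orderOf f₂ = 2 ∧ orderOf f₃ = 2 ∧
      List.Pairwise (fun a b => ¬ IsConj a b) [f₁, f₂, f₃] ∧
      ∀ g : MulAut (DihedralGroup (p ^ r * q ^ s)),
        orderOf g = 2 → IsConj g f₁ ∨ IsConj g f₂ ∨ IsConj g f₃ := by
  classical
  set n := p ^ r * q ^ s with hn
  have hppow_odd : Odd (p ^ r) := hpodd.pow
  have hqpow_odd : Odd (q ^ s) := hqodd.pow
  have hnodd : Odd n := hppow_odd.mul hqpow_odd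
  have hp1 : 1 < p ^ r := Nat.one_lt_pow (by omega) hp.one_lt
  have hq1 : 1 < q ^ s := Nat.one_lt_pow (by omega) hq.one_lt
  have hn1 : 1 < n := lt_of_lt_of_le hp1 (Nat.le_mul_of_pos_right _ (by omega))
  haveI hNZ : NeZero n := ⟨by omega⟩
  haveI hNZp : NeZero (p ^ r) := ⟨by omega⟩
  haveI hNZq : NeZero (q ^ s) := ⟨by omega⟩
  have hcop : Nat.Coprime (p ^ r) (q ^ s) :=
    Nat.Coprime.pow _ _ ((Nat.coprime_primes hp hq).mpr hpq)
  set e := ZMod.chineseRemainder hcop with he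
  -- 2 is invertible everywhere
  obtain ⟨w2, hw2⟩ : IsUnit (2 : ZMod n) := by
    rw [show (2 : ZMod n) = ((2 : ℕ) : ZMod n) by norm_num, ZMod.isUnit_iff_coprime]
    exact Nat.coprime_two_left.mpr hnodd
  obtain ⟨wp, hwp⟩ : IsUnit (2 : ZMod (p ^ r)) := by
    rw [show (2 : ZMod (p ^ r)) = ((2 : ℕ) : ZMod (p ^ r)) by norm_num,
      ZMod.isUnit_iff_coprime]
    exact Nat.coprime_two_left.mpr hppow_odd
  obtain ⟨wq, hwq⟩ : IsUnit (2 : ZMod (q ^ s)) := by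
    rw [show (2 : ZMod (q ^ s)) = ((2 : ℕ) : ZMod (q ^ s)) by norm_num,
      ZMod.isUnit_iff_coprime]
    exact Nat.coprime_two_left.mpr hqpow_odd
  have hinv2 : (2 : ZMod n) * ((w2⁻¹ : (ZMod n)ˣ) : ZMod n) = 1 := by
    rw [← hw2, ← Units.val_mul, mul_inv_cancel w2, Units.val_one]
  have hinvp : (2 : ZMod (p ^ r)) * ((wp⁻¹ : (ZMod (p ^ r))ˣ) : ZMod (p ^ r)) = 1 := by
    rw [← hwp, ← Units.val_mul, mul_inv_cancel wp, Units.val_one]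
  have hinvq : (2 : ZMod (q ^ s)) * ((wq⁻¹ : (ZMod (q ^ s))ˣ) : ZMod (q ^ s)) = 1 := by
    rw [← hwq, ← Units.val_mul, mul_inv_cancel wq, Units.val_one]
  -- the special square root of 1
  set u : ZMod n := e.symm (1, -1) with hu_def
  have heu : e u = (1, -1) := e.apply_symm_apply _
  have huu : u * u = 1 := by
    apply e.injective
    rw [map_mul, map_one, heu, Prod.mk_mul_mk]
    simp
  set U : (ZMod n)ˣ := ⟨u, u, huu, huu⟩ with hU_def
  have hUval : (U : ZMod n) = u := rfl
  have hnegp : (-1 : ZMod (p ^ r)) ≠ 1 := neg_one_ne_one' hppow_odd hp1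
  have hnegq : (-1 : ZMod (q ^ s)) ≠ 1 := neg_one_ne_one' hqpow_odd hq1
  have hne1 : (-1 : ZMod n) ≠ 1 := neg_one_ne_one' hnodd hn1
  have hu_ne_one : u ≠ 1 := by
    intro h
    have h2 := congrArg e h
    rw [heu, map_one] at h2
    exact hnegq (congrArg Prod.snd h2)
  have hu_ne_neg : u ≠ -1 := by
    intro h
    have h2 := congrArg e h
    rw [heu, map_neg, map_one] at h2
    have h3 := congrArg Prod.fst h2
    simp only [Prod.fst_neg, Prod.fst_one] at h3
    exact hnegp (by rw [← h3])
  have hu_ne_negu : u ≠ -u := by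
    intro h
    have h2 : (2 : ZMod n) * u = 0 := by linear_combination h
    rw [← hw2] at h2
    have h3 := (Units.mul_right_eq_zero w2).mp h2
    rw [h3] at huu
    haveI : Fact (1 < n) := ⟨hn1⟩
    exact (zero_ne_one (α := ZMod n)) (by simpa using huu)
  have hUU : U * U = 1 := Units.ext (by simpa using huu)
  have hU_ne_one : U ≠ 1 := fun h => hu_ne_one (congrArg Units.val h)
  refine ⟨ψ 0 (-1), ψ 0 U, ψ 0 (-U), ?_, ?_, ?_, ?_, ?_⟩
  · refine orderOf_psi_eq_two (by simp) ?_
    intro h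
    exact hne1 (by simpa using congrArg Units.val h)
  · refine orderOf_psi_eq_two hUU hU_ne_one
  · refine orderOf_psi_eq_two (by rw [neg_mul_neg]; exact hUU) ?_
    intro h
    have := congrArg Units.val h
    simp only [Units.val_neg, hUval, Units.val_one] at this
    exact hu_ne_neg (by linear_combination -this)
  · -- pairwise non-conjugate
    have c12 : ¬ IsConj (ψ (0 : ZMod n) (-1)) (ψ 0 U) := by
      intro h
      have := congrArg Units.val (units_eq_of_isConj hnodd h)
      simp only [Units.val_neg, Units.val_one, hUval] at this
      exact hu_ne_neg this.symm
    have c13 : ¬ IsConj (ψ (0 : ZMod n) (-1)) (ψ 0 (-U)) := by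
      intro h
      have := congrArg Units.val (units_eq_of_isConj hnodd h)
      simp only [Units.val_neg, Units.val_one, hUval] at this
      exact hu_ne_one (by linear_combination this)
    have c23 : ¬ IsConj (ψ (0 : ZMod n) U) (ψ 0 (-U)) := by
      intro h
      have := congrArg Units.val (units_eq_of_isConj hnodd h)
      simp only [Units.val_neg, hUval] at this
      exact hu_ne_negu this
    simp only [List.pairwise_cons, List.mem_cons, List.mem_singleton, List.not_mem_nil,
      forall_eq_or_imp, forall_eq]
    exact ⟨⟨c12, c13, fun _ h => h.elim⟩, ⟨c23, fun _ h => h.elim⟩, fun _ h => h.elim, List.Pairwise.nil⟩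
  · -- completeness
    intro g hg
    obtain ⟨k, l, rfl⟩ := exists_psi hnodd g
    have hg2 : ψ k l ^ 2 = 1 := by rw [← hg]; exact pow_orderOf_eq_one _
    have hg1 : ψ k l ≠ 1 := by intro h; rw [h, orderOf_one] at hg; omega
    rw [pow_two, ψ_mul, ← ψ_one] at hg2
    obtain ⟨hk_eq, hl_eq⟩ := ψ_inj hg2
    have hlv : (l : ZMod n) * (l : ZMod n) = 1 := by
      have := congrArg Units.val hl_eq
      rwa [Units.val_mul, Units.val_one] at this
    have hcomp : e (l : ZMod n) * e (l : ZMod n) = 1 := by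
      rw [← map_mul, hlv, map_one]
    have hc1 : (e (l : ZMod n)).1 * (e (l : ZMod n)).1 = 1 := by
      have := congrArg Prod.fst hcomp
      simpa using this
    have hc2 : (e (l : ZMod n)).2 * (e (l : ZMod n)).2 = 1 := by
      have := congrArg Prod.snd hcomp
      simpa using this
    rcases sq_eq_one_cases hp hpodd _ hc1 with ha | ha <;>
      rcases sq_eq_one_cases hq hqodd _ hc2 with hb | hb
    · -- l = 1 : impossible
      exfalso
      have hl1 : (l : ZMod n) = 1 := by
        apply e.injective
        rw [map_one, Prod.ext_iff]
        exact ⟨by simpa using ha, by simpa using hb⟩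
      have hk0 : k = 0 := by
        have h2 : (2 : ZMod n) * k = 0 := by
          rw [hl1] at hk_eq; linear_combination hk_eq
        rw [← hw2] at h2
        exact (Units.mul_right_eq_zero w2).mp h2
      have hl1' : l = 1 := Units.ext (by rw [hl1, Units.val_one])
      apply hg1
      rw [hk0, hl1', ψ_one]
    · -- l = U
      right; left
      have hlu : (l : ZMod n) = u := by
        apply e.injective
        rw [heu, Prod.ext_iff]
        exact ⟨by simpa using ha, by simpa using hb⟩
      have hlU : l = U := Units.ext (by rw [hlu, hUval])
      rw [hlu] at hk_eq
      -- first component of k vanishes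
      have hek1 : (e k).1 = 0 := by
        have h0 : e (k + u * k) = 0 := by rw [hk_eq, map_zero]
        rw [map_add, map_mul, heu] at h0
        have h1 := congrArg Prod.fst h0
        simp only [Prod.fst_add, Prod.fst_mul, Prod.fst_zero, one_mul] at h1
        have h2 : (2 : ZMod (p ^ r)) * (e k).1 = 0 := by linear_combination h1
        rw [← hwp] at h2
        exact (Units.mul_right_eq_zero wp).mp h2
      set m : ZMod n := e.symm (0, -(((wq⁻¹ : (ZMod (q ^ s))ˣ) : ZMod (q ^ s)) * (e k).2))
        with hm_def
      have hem : e m = (0, -(((wq⁻¹ : (ZMod (q ^ s))ˣ) : ZMod (q ^ s)) * (e k).2)) :=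
        e.apply_symm_apply _
      have key : (u - 1) * m = k := by
        apply e.injective
        rw [map_mul, map_sub, heu, map_one, hem, Prod.ext_iff]
        constructor
        · simp [hek1]
        · simp only [Prod.snd_sub, Prod.snd_mul, Prod.snd_one]
          linear_combination (e k).2 * hinvq
      rw [hlU]
      refine isConj_psi 1 m ?_
      simp only [Units.val_one, one_mul, zero_add, hUval]
      linear_combination -key
    · -- l = -U
      right; right
      have hlu : (l : ZMod n) = -u := by
        apply e.injective
        rw [map_neg, heu, Prod.ext_iff]
        exact ⟨by simpa using ha, by simpa using hb⟩
      have hlU : l = -U := Units.ext (by rw [hlu]; simp [hUval])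
      rw [hlu] at hk_eq
      have hek2 : (e k).2 = 0 := by
        have h0 : e (k + (-u) * k) = 0 := by rw [hk_eq, map_zero]
        rw [map_add, map_mul, map_neg, heu] at h0
        have h1 := congrArg Prod.snd h0
        simp only [Prod.snd_add, Prod.snd_mul, Prod.snd_zero, Prod.snd_neg] at h1
        have h2 : (2 : ZMod (q ^ s)) * (e k).2 = 0 := by linear_combination h1
        rw [← hwq] at h2
        exact (Units.mul_right_eq_zero wq).mp h2
      set m : ZMod n := e.symm (-(((wp⁻¹ : (ZMod (p ^ r))ˣ) : ZMod (p ^ r)) * (e k).1), 0)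
        with hm_def
      have hem : e m = (-(((wp⁻¹ : (ZMod (p ^ r))ˣ) : ZMod (p ^ r)) * (e k).1), 0) :=
        e.apply_symm_apply _
      have key : (-u - 1) * m = k := by
        apply e.injective
        rw [map_mul, map_sub, map_neg, heu, map_one, hem, Prod.ext_iff]
        constructor
        · simp only [Prod.fst_sub, Prod.fst_mul, Prod.fst_one, Prod.fst_neg]
          linear_combination (e k).1 * hinvp
        · simp [hek2]
      rw [hlU]
      refine isConj_psi 1 m ?_
      simp only [Units.val_one, one_mul, zero_add, Units.val_neg, hUval]
      linear_combination -key
    · -- l = -1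
      left
      have hlneg : (l : ZMod n) = -1 := by
        apply e.injective
        rw [map_neg, map_one, Prod.ext_iff]
        constructor
        · simpa using ha
        · simpa using hb
      have hlneg' : l = -1 := Units.ext (by rw [hlneg]; simp)
      rw [hlneg']
      refine isConj_psi 1 (-(((w2⁻¹ : (ZMod n)ˣ) : ZMod n) * k)) ?_
      simp only [Units.val_one, one_mul, zero_add, Units.val_neg]
      linear_combination -k * hinv2
end

section
/- Let n = 2^r with r ≥ 3 and let D_n be the dihedral group of order 2n. Then Aut(D_n) has exactly 5 conjugacy classes of elements of order 2, represented by Ψ_{2^{r−1},1}, Ψ_{0,2^{r−1}−1}, Ψ_{0,2^{r−1}+1}, Ψ_{0,−1}, and Ψ_{1,−1}. -/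
open DihedralGroup

/-- `f` is the automorphism `Ψ_{k,l}` of `D_n`: `r^i ↦ r^{l i}`, `s r^i ↦ s r^{k + l i}`. -/
def IsPsi (n : ℕ) (k l : ZMod n) (f : MulAut (DihedralGroup n)) : Prop :=
  (∀ i : ZMod n, f (r i) = r (l * i)) ∧ (∀ i : ZMod n, f (sr i) = sr (k + l * i))

namespace DihedralPsiAux

variable {n : ℕ}

/-- The underlying function of `Ψ_{k,l}`. -/
def psiFun (k l : ZMod n) : DihedralGroup n → DihedralGroup n
  | .r i => .r (l * i)
  | .sr i => .sr (k + l * i)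

lemma psiFun_r (k l i : ZMod n) : psiFun k l (r i) = r (l * i) := rfl

lemma psiFun_sr (k l i : ZMod n) : psiFun k l (sr i) = sr (k + l * i) := rfl

/-- The automorphism `Ψ_{k,l}` for a unit `l`. -/
def psi (k : ZMod n) (l : (ZMod n)ˣ) : MulAut (DihedralGroup n) where
  toFun := psiFun k ↑l
  invFun := psiFun (-(↑l⁻¹ * k)) ↑l⁻¹
  left_inv := by
    rintro (i | i)
    · rw [psiFun_r, psiFun_r, Units.inv_mul_cancel_left]
    · rw [psiFun_sr, psiFun_sr, mul_add, Units.inv_mul_cancel_left, neg_add_cancel_left]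
  right_inv := by
    rintro (i | i)
    · rw [psiFun_r, psiFun_r, Units.mul_inv_cancel_left]
    · rw [psiFun_sr, psiFun_sr, mul_add, mul_neg, Units.mul_inv_cancel_left,
        Units.mul_inv_cancel_left, add_neg_cancel_left]
  map_mul' := by
    rintro (a | a) (b | b) <;>
      simp only [r_mul_r, r_mul_sr, sr_mul_r, sr_mul_sr, psiFun_r, psiFun_sr] <;>
      congr 1 <;> ring

@[simp] lemma psi_r (k : ZMod n) (l : (ZMod n)ˣ) (i : ZMod n) :
    psi k l (r i) = r ((l : ZMod n) * i) := rfl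

@[simp] lemma psi_sr (k : ZMod n) (l : (ZMod n)ˣ) (i : ZMod n) :
    psi k l (sr i) = sr (k + (l : ZMod n) * i) := rfl

lemma psi_mul (k k' : ZMod n) (l l' : (ZMod n)ˣ) :
    psi k l * psi k' l' = psi (k + (l : ZMod n) * k') (l * l') := by
  apply MulEquiv.ext
  rintro (i | i) <;>
    simp only [MulAut.mul_apply, psi_r, psi_sr, Units.val_mul] <;> congr 1 <;> ring

lemma psi_one : (psi (0 : ZMod n) 1) = 1 := by
  apply MulEquiv.ext
  rintro (i | i) <;>
    simp only [psi_r, psi_sr, Units.val_one, one_mul, zero_add, MulAut.one_apply]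

lemma psi_eq_one {k : ZMod n} {l : (ZMod n)ˣ} (hk : k = 0) (hl : (l : ZMod n) = 1) :
    psi k l = 1 := by
  have hl' : l = 1 := Units.ext (by rw [hl, Units.val_one])
  rw [hk, hl']
  exact psi_one

lemma psi_inj {k k' : ZMod n} {l l' : (ZMod n)ˣ} (h : psi k l = psi k' l') :
    k = k' ∧ (l : ZMod n) = ↑l' := by
  have h1 := congrArg (fun f : MulAut (DihedralGroup n) => f (r 1)) h
  have h2 := congrArg (fun f : MulAut (DihedralGroup n) => f (sr 0)) h
  simp only [psi_r, psi_sr, mul_one, mul_zero, add_zero, r.injEq, sr.injEq] at h1 h2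
  exact ⟨h2, h1⟩

lemma psi_inv (k : ZMod n) (l : (ZMod n)ˣ) :
    (psi k l)⁻¹ = psi (-((↑l⁻¹ : ZMod n) * k)) l⁻¹ := by
  refine inv_eq_of_mul_eq_one_right ?_
  rw [psi_mul]
  refine psi_eq_one ?_ ?_
  · rw [mul_neg, Units.mul_inv_cancel_left, add_neg_cancel]
  · rw [mul_inv_cancel, Units.val_one]

lemma psi_conj (a k : ZMod n) (b l : (ZMod n)ˣ) :
    psi a b * psi k l * (psi a b)⁻¹ = psi (a + (b : ZMod n) * k - (l : ZMod n) * a) l := by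
  have hb : (↑b : ZMod n) * ↑b⁻¹ = 1 := Units.mul_inv b
  rw [psi_inv, psi_mul, psi_mul]
  have h1 : a + (b : ZMod n) * k + (↑(b * l) : ZMod n) * -((↑b⁻¹ : ZMod n) * a) = a + (b : ZMod n) * k - (l : ZMod n) * a := by
    rw [Units.val_mul]
    linear_combination (-(↑l * a)) * hb
  have h2 : b * l * b⁻¹ = l := by rw [mul_comm b l, mul_inv_cancel_right]
  rw [h1, h2]

lemma r_pow (a : ZMod n) (m : ℕ) : (r a) ^ m = r ((m : ZMod n) * a) := by
  induction m with
  | zero => simp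
  | succ m ih =>
    rw [pow_succ, ih, r_mul_r]
    congr 1
    push_cast
    ring

lemma exists_psi (hn : 2 < n) (f : MulAut (DihedralGroup n)) :
    ∃ (k : ZMod n) (l : (ZMod n)ˣ), f = psi k l := by
  haveI : NeZero n := ⟨by omega⟩
  obtain ⟨l, hl⟩ : ∃ l, f (r 1) = r l := by
    rcases h : f (r 1) with j | j
    · exact ⟨j, rfl⟩
    · exfalso
      have h2 := f.orderOf_eq (r 1)
      rw [h, orderOf_sr, orderOf_r_one] at h2
      omega
  obtain ⟨m0, hm0⟩ : ∃ m0, f⁻¹ (r 1) = r m0 := by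
    rcases h : f⁻¹ (r 1) with j | j
    · exact ⟨j, rfl⟩
    · exfalso
      have h2 := (f⁻¹ : MulAut (DihedralGroup n)).orderOf_eq (r 1)
      rw [h, orderOf_sr, orderOf_r_one] at h2
      omega
  have hr : ∀ i : ZMod n, f (r i) = r (l * i) := by
    intro i
    have h1 : f (r i) = (f (r 1)) ^ i.val := by
      rw [← map_pow, r_one_pow, ZMod.natCast_zmod_val]
    rw [h1, hl, r_pow]
    congr 1
    rw [ZMod.natCast_zmod_val, mul_comm]
  have hlu : IsUnit (l : ZMod n) := by
    have h1 : f (f⁻¹ (r 1)) = r 1 := by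
      rw [MulAut.inv_def]
      exact f.apply_symm_apply _
    rw [hm0, hr] at h1
    simp only [r.injEq] at h1
    exact IsUnit.of_mul_eq_one _ h1
  obtain ⟨k, hk⟩ : ∃ k, f (sr 0) = sr k := by
    rcases h : f (sr 0) with j | j
    · exfalso
      obtain ⟨u, hu⟩ := hlu
      have h1 : f (r (↑u⁻¹ * j)) = r j := by
        rw [hr, ← hu, Units.mul_inv_cancel_left]
      have heq := f.injective (h.trans h1.symm)
      exact absurd heq (by simp)
    · exact ⟨j, rfl⟩
  have hsr : ∀ i : ZMod n, f (sr i) = sr (k + l * i) := by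
    intro i
    have h1 : (sr i : DihedralGroup n) = sr 0 * r i := by rw [sr_mul_r, zero_add]
    rw [h1, map_mul, hk, hr, sr_mul_r]
  obtain ⟨u, hu⟩ := hlu
  refine ⟨k, u, ?_⟩
  apply MulEquiv.ext
  rintro (i | i)
  · rw [hr, psi_r, hu]
  · rw [hsr, psi_sr, hu]

lemma psi_sq (k : ZMod n) (l : (ZMod n)ˣ) :
    (psi k l) ^ 2 = psi (k + (l : ZMod n) * k) (l * l) := by
  rw [pow_two, psi_mul]

/-! ### Arithmetic in `ZMod (2 ^ r)` -/

lemma pow_facts {r : ℕ} (hr : 3 ≤ r) :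
    2 ^ (r - 1) + 2 ^ (r - 1) = 2 ^ r ∧ 4 ≤ 2 ^ (r - 1) ∧ 8 ≤ 2 ^ r := by
  have h1 : 2 ^ (r - 1) * 2 = 2 ^ r := by
    rw [← pow_succ]
    congr 1
    omega
  have h2 : (2 : ℕ) ^ 2 ≤ 2 ^ (r - 1) := Nat.pow_le_pow_right (by norm_num) (by omega)
  refine ⟨by omega, by omega, by omega⟩

lemma cast_ne_zero {r : ℕ} (_hr : 3 ≤ r) {a : ℕ} (h0 : 0 < a) (h1 : a < 2 ^ r) :
    (a : ZMod (2 ^ r)) ≠ 0 := by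
  rw [Ne, ZMod.natCast_eq_zero_iff]
  intro hdvd
  exact absurd (Nat.le_of_dvd h0 hdvd) (by omega)

lemma H_add_H {r : ℕ} (hr : 3 ≤ r) :
    ((2 ^ (r - 1) : ℕ) : ZMod (2 ^ r)) + ((2 ^ (r - 1) : ℕ) : ZMod (2 ^ r)) = 0 := by
  rw [← Nat.cast_add, (pow_facts hr).1, ZMod.natCast_self]

lemma H_mul_H {r : ℕ} (hr : 3 ≤ r) :
    ((2 ^ (r - 1) : ℕ) : ZMod (2 ^ r)) * ((2 ^ (r - 1) : ℕ) : ZMod (2 ^ r)) = 0 := by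
  rw [← Nat.cast_mul]
  have h1 : 2 ^ (r - 1) * 2 ^ (r - 1) = 2 ^ r * 2 ^ (r - 2) := by
    rw [← pow_add, ← pow_add]
    congr 1
    omega
  rw [h1, Nat.cast_mul, ZMod.natCast_self, zero_mul]

lemma two_ne {r : ℕ} (hr : 3 ≤ r) : (2 : ZMod (2 ^ r)) ≠ 0 := by
  have h := cast_ne_zero hr (show 0 < 2 by norm_num)
    (by have := (pow_facts hr).2.2; omega)
  simpa using h

lemma H_ne_zero {r : ℕ} (hr : 3 ≤ r) : ((2 ^ (r - 1) : ℕ) : ZMod (2 ^ r)) ≠ 0 :=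
  cast_ne_zero hr (by positivity) (by have := (pow_facts hr).1; have := (pow_facts hr).2.1; omega)

lemma H_ne_two {r : ℕ} (hr : 3 ≤ r) : ((2 ^ (r - 1) : ℕ) : ZMod (2 ^ r)) ≠ 2 := by
  intro h
  have h4 := (pow_facts hr).2.1
  have h0 : ((2 ^ (r - 1) - 2 : ℕ) : ZMod (2 ^ r)) = 0 := by
    rw [Nat.cast_sub (by omega), Nat.cast_ofNat, h, sub_self]
  exact cast_ne_zero hr (by omega) (by have := (pow_facts hr).1; omega) h0

lemma H_add_two_ne {r : ℕ} (hr : 3 ≤ r) : ((2 ^ (r - 1) : ℕ) : ZMod (2 ^ r)) + 2 ≠ 0 := by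
  intro h
  have h0 : ((2 ^ (r - 1) + 2 : ℕ) : ZMod (2 ^ r)) = 0 := by
    rw [Nat.cast_add, Nat.cast_ofNat, h]
  exact cast_ne_zero hr (by positivity)
    (by have := (pow_facts hr).1; have := (pow_facts hr).2.1; omega) h0

lemma hE {r : ℕ} (hr : 3 ≤ r) : (2 : ZMod (2 ^ r)) ^ (r - 1) = 2 * 2 ^ (r - 2) := by
  rw [← pow_succ']
  congr 1
  omega

lemma H_mul_int {r : ℕ} (hr : 3 ≤ r) (t : ℤ) :
    ((2 ^ (r - 1) : ℕ) : ZMod (2 ^ r)) * (t : ZMod (2 ^ r)) = 0 ∨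
      ((2 ^ (r - 1) : ℕ) : ZMod (2 ^ r)) * (t : ZMod (2 ^ r)) =
        ((2 ^ (r - 1) : ℕ) : ZMod (2 ^ r)) := by
  have hH := H_add_H hr
  push_cast at hH ⊢
  rcases Int.even_or_odd t with ⟨d, hd⟩ | ⟨d, hd⟩
  · left
    rw [hd]
    push_cast
    linear_combination ((d : ℤ) : ZMod (2 ^ r)) * hH
  · right
    rw [hd]
    push_cast
    linear_combination ((d : ℤ) : ZMod (2 ^ r)) * hH

lemma sq_cases {r : ℕ} (hr : 3 ≤ r) {x : ZMod (2 ^ r)} (hx : x * x = 1) :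
    x = 1 ∨ x = ((2 ^ (r - 1) : ℕ) : ZMod (2 ^ r)) + 1 ∨
      x = ((2 ^ (r - 1) : ℕ) : ZMod (2 ^ r)) - 1 ∨ x = -1 := by
  haveI : NeZero (2 ^ r) := ⟨by positivity⟩
  set a : ℤ := (x.val : ℤ) with ha
  have hax : ((a : ℤ) : ZMod (2 ^ r)) = x := by
    rw [ha]
    push_cast
    exact ZMod.natCast_zmod_val x
  have hdvd : (2 : ℤ) ^ r ∣ a * a - 1 := by
    have h0 : ((a * a - 1 : ℤ) : ZMod (2 ^ r)) = 0 := by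
      push_cast
      rw [hax, hx]
      ring
    have h1 := (ZMod.intCast_zmod_eq_zero_iff_dvd _ _).mp h0
    simpa using h1
  have ha_odd : ∃ b : ℤ, a = 2 * b + 1 := by
    rcases Int.even_or_odd a with ⟨b, hb⟩ | ⟨b, hb⟩
    · exfalso
      obtain ⟨d, hd⟩ : (2 : ℤ) ∣ a * a - 1 :=
        dvd_trans (dvd_pow_self 2 (by omega : r ≠ 0)) hdvd
      rw [hb] at hd
      set c := b * b with hc
      have h4 : 2 * (2 * c) - 1 = 2 * d := by
        rw [hc]
        linear_combination hd
      omega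
    · exact ⟨b, hb⟩
  obtain ⟨b, hb⟩ := ha_odd
  have hbb : (2 : ℤ) ^ (r - 2) ∣ b * (b + 1) := by
    have h1 : (2 : ℤ) ^ r = 4 * 2 ^ (r - 2) := by
      rw [show (4 : ℤ) = 2 ^ 2 by norm_num, ← pow_add]
      congr 1
      omega
    have h2 : (4 : ℤ) * 2 ^ (r - 2) ∣ 4 * (b * (b + 1)) := by
      rw [← h1]
      have h3 : a * a - 1 = 4 * (b * (b + 1)) := by rw [hb]; ring
      rw [← h3]
      exact hdvd
    exact (mul_dvd_mul_iff_left (by norm_num : (4 : ℤ) ≠ 0)).mp h2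
  rcases Int.even_or_odd b with ⟨c, hc⟩ | ⟨c, hc⟩
  · -- b even : a = 2^(r-1) t + 1
    have hcop : IsCoprime ((2 : ℤ) ^ (r - 2)) (b + 1) :=
      IsCoprime.pow_left ⟨-c, 1, by rw [hc]; ring⟩
    obtain ⟨t, ht⟩ : (2 : ℤ) ^ (r - 2) ∣ b := hcop.dvd_of_dvd_mul_right hbb
    have hx2 : x = ((2 ^ (r - 1) : ℕ) : ZMod (2 ^ r)) * ((t : ℤ) : ZMod (2 ^ r)) + 1 := by
      rw [← hax, hb, ht]
      push_cast
      rw [hE hr]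
      ring
    rcases H_mul_int hr t with h | h
    · left
      rw [hx2, h, zero_add]
    · right; left
      rw [hx2, h]
  · -- b odd : a = 2^(r-1) t - 1
    have hcop : IsCoprime ((2 : ℤ) ^ (r - 2)) b :=
      IsCoprime.pow_left ⟨-c, 1, by rw [hc]; ring⟩
    obtain ⟨t, ht⟩ : (2 : ℤ) ^ (r - 2) ∣ b + 1 := hcop.dvd_of_dvd_mul_left hbb
    have hx2 : x = ((2 ^ (r - 1) : ℕ) : ZMod (2 ^ r)) * ((t : ℤ) : ZMod (2 ^ r)) - 1 := by
      rw [← hax, hb, show b = 2 ^ (r - 2) * t - 1 by linarith [ht]]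
      push_cast
      rw [hE hr]
      ring
    rcases H_mul_int hr t with h | h
    · right; right; right
      rw [hx2, h, zero_sub]
    · right; right; left
      rw [hx2, h]

lemma two_mul_eq_zero {r : ℕ} (hr : 3 ≤ r) {k : ZMod (2 ^ r)} (h : 2 * k = 0) :
    k = 0 ∨ k = ((2 ^ (r - 1) : ℕ) : ZMod (2 ^ r)) := by
  haveI : NeZero (2 ^ r) := ⟨by positivity⟩
  have hv : ((2 * k.val : ℕ) : ZMod (2 ^ r)) = 0 := by
    rw [Nat.cast_mul, ZMod.natCast_zmod_val, Nat.cast_ofNat]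
    exact h
  have hdvd : 2 ^ r ∣ 2 * k.val := (ZMod.natCast_eq_zero_iff _ _).mp hv
  have h2 : 2 ^ (r - 1) ∣ k.val := by
    have h1 : 2 * 2 ^ (r - 1) ∣ 2 * k.val := by
      rw [show 2 * 2 ^ (r - 1) = 2 ^ r by rw [← pow_succ']; congr 1; omega]
      exact hdvd
    exact (Nat.mul_dvd_mul_iff_left (by norm_num : 0 < 2)).mp h1
  obtain ⟨c, hc⟩ := h2
  have hlt : k.val < 2 ^ r := ZMod.val_lt k
  have hpowr : 2 ^ (r - 1) * 2 = 2 ^ r := by rw [← pow_succ]; congr 1; omega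
  have hc2 : c < 2 := by
    by_contra hcc
    push_neg at hcc
    have h3 : 2 ^ (r - 1) * 2 ≤ 2 ^ (r - 1) * c := Nat.mul_le_mul_left _ hcc
    linarith [hc, hlt, hpowr]
  have hk : k = ((k.val : ℕ) : ZMod (2 ^ r)) := (ZMod.natCast_zmod_val k).symm
  interval_cases c
  · left
    rw [hk, hc, mul_zero, Nat.cast_zero]
  · right
    rw [hk, hc, mul_one]

lemma mul_H_even {r : ℕ} (hr : 3 ≤ r) {k : ZMod (2 ^ r)}
    (h : k * ((2 ^ (r - 1) : ℕ) : ZMod (2 ^ r)) = 0) :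
    ∃ t : ZMod (2 ^ r), k = 2 * t := by
  haveI : NeZero (2 ^ r) := ⟨by positivity⟩
  have hv : ((k.val * 2 ^ (r - 1) : ℕ) : ZMod (2 ^ r)) = 0 := by
    rw [Nat.cast_mul, ZMod.natCast_zmod_val]
    exact h
  have hdvd := (ZMod.natCast_eq_zero_iff _ _).mp hv
  have h2 : 2 ∣ k.val := by
    have h1 : 2 * 2 ^ (r - 1) ∣ k.val * 2 ^ (r - 1) := by
      rw [show 2 * 2 ^ (r - 1) = 2 ^ r by rw [← pow_succ']; congr 1; omega]
      exact hdvd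
    exact (Nat.mul_dvd_mul_iff_right (by positivity : 0 < 2 ^ (r - 1))).mp h1
  obtain ⟨c, hc⟩ := h2
  refine ⟨(c : ZMod (2 ^ r)), ?_⟩
  rw [← ZMod.natCast_zmod_val k, hc]
  push_cast
  ring

/-- The parity homomorphism. -/
def phi {r : ℕ} (hr : 3 ≤ r) : ZMod (2 ^ r) →+* ZMod 2 :=
  ZMod.castHom (dvd_pow_self 2 (by omega : r ≠ 0)) (ZMod 2)

lemma phi_natCast {r : ℕ} (hr : 3 ≤ r) (a : ℕ) :
    phi hr (a : ZMod (2 ^ r)) = (a : ZMod 2) := map_natCast _ a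

lemma zmod2_cases : ∀ y : ZMod 2, y = 0 ∨ y = 1 := by decide

lemma cast2_mod {a : ℕ} (h : ((a : ℕ) : ZMod 2) = 1) : a % 2 = 1 := by
  have h1 : a ≡ 1 [MOD 2] := by
    rw [← ZMod.natCast_eq_natCast_iff, h, Nat.cast_one]
  simpa [Nat.ModEq] using h1

lemma phi_eq_zero {r : ℕ} (hr : 3 ≤ r) {k : ZMod (2 ^ r)} (h : phi hr k = 0) :
    ∃ t : ZMod (2 ^ r), k = 2 * t := by
  haveI : NeZero (2 ^ r) := ⟨by positivity⟩
  have h1 : ((k.val : ℕ) : ZMod 2) = 0 := by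
    rw [← phi_natCast hr, ZMod.natCast_zmod_val]
    exact h
  obtain ⟨c, hc⟩ := (ZMod.natCast_eq_zero_iff _ _).mp h1
  refine ⟨(c : ZMod (2 ^ r)), ?_⟩
  rw [← ZMod.natCast_zmod_val k, hc]
  push_cast
  ring

lemma phi_eq_one {r : ℕ} (hr : 3 ≤ r) {k : ZMod (2 ^ r)} (h : phi hr k = 1) :
    ∃ t : ZMod (2 ^ r), k = 2 * t + 1 := by
  haveI : NeZero (2 ^ r) := ⟨by positivity⟩
  have h1 : ((k.val : ℕ) : ZMod 2) = 1 := by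
    rw [← phi_natCast hr, ZMod.natCast_zmod_val]
    exact h
  have h2 := cast2_mod h1
  obtain ⟨c, hc⟩ : ∃ c, k.val = 2 * c + 1 := ⟨k.val / 2, by omega⟩
  refine ⟨(c : ZMod (2 ^ r)), ?_⟩
  rw [← ZMod.natCast_zmod_val k, hc]
  push_cast
  ring

lemma phi_isUnit {r : ℕ} (hr : 3 ≤ r) {u : ZMod (2 ^ r)} (h : IsUnit u) :
    phi hr u = 1 := by
  have h1 : IsUnit (phi hr u) := h.map _
  rcases zmod2_cases (phi hr u) with h0 | h0
  · rw [h0] at h1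
    exact absurd h1 (by simp)
  · exact h0

lemma isUnit_of_phi {r : ℕ} (hr : 3 ≤ r) {u : ZMod (2 ^ r)} (h : phi hr u = 1) :
    IsUnit u := by
  haveI : NeZero (2 ^ r) := ⟨by positivity⟩
  have h1 : ((u.val : ℕ) : ZMod 2) = 1 := by
    rw [← phi_natCast hr, ZMod.natCast_zmod_val]
    exact h
  rw [← ZMod.natCast_zmod_val u, ZMod.isUnit_iff_coprime]
  exact Nat.Coprime.pow_right _ (Nat.coprime_two_right.mpr (Nat.odd_iff.mpr (cast2_mod h1)))

lemma cast2_two_pow {m : ℕ} (hm : m ≠ 0) : ((2 ^ m : ℕ) : ZMod 2) = 0 := by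
  rw [Nat.cast_pow, Nat.cast_ofNat, show ((2 : ZMod 2)) = 0 from rfl, zero_pow hm]

lemma phi_H {r : ℕ} (hr : 3 ≤ r) :
    phi hr ((2 ^ (r - 1) : ℕ) : ZMod (2 ^ r)) = 0 := by
  rw [phi_natCast hr, cast2_two_pow (by omega)]


lemma isConj_psi_of (a k k' : ZMod n) (b l : (ZMod n)ˣ)
    (h : a + (b : ZMod n) * k - (l : ZMod n) * a = k') :
    IsConj (psi k l) (psi k' l) := by
  rw [isConj_iff]
  exact ⟨psi a b, by rw [psi_conj, h]⟩

end DihedralPsiAux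

open DihedralPsiAux

/-- For `n = 2^r`, `r ≥ 3`, the automorphism group of the dihedral group `D_n` has
exactly `5` conjugacy classes of elements of order `2`, represented by
`Ψ_{2^{r-1},1}`, `Ψ_{0,2^{r-1}-1}`, `Ψ_{0,2^{r-1}+1}`, `Ψ_{0,-1}` and `Ψ_{1,-1}`. -/
theorem dihedral_twoPow_aut_five_involution_classes (r : ℕ) (hr : 3 ≤ r) :
    ∃ f₁ f₂ f₃ f₄ f₅ : MulAut (DihedralGroup (2 ^ r)),
      IsPsi (2 ^ r) ((2 ^ (r - 1) : ℕ) : ZMod (2 ^ r)) 1 f₁ ∧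
      IsPsi (2 ^ r) 0 (((2 ^ (r - 1) : ℕ) : ZMod (2 ^ r)) - 1) f₂ ∧
      IsPsi (2 ^ r) 0 (((2 ^ (r - 1) : ℕ) : ZMod (2 ^ r)) + 1) f₃ ∧
      IsPsi (2 ^ r) 0 (-1) f₄ ∧
      IsPsi (2 ^ r) 1 (-1) f₅ ∧
      orderOf f₁ = 2 ∧ orderOf f₂ = 2 ∧ orderOf f₃ = 2 ∧ orderOf f₄ = 2 ∧
      orderOf f₅ = 2 ∧
      List.Pairwise (fun a b => ¬ IsConj a b) [f₁, f₂, f₃, f₄, f₅] ∧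
      ∀ g : MulAut (DihedralGroup (2 ^ r)), orderOf g = 2 →
        IsConj g f₁ ∨ IsConj g f₂ ∨ IsConj g f₃ ∨ IsConj g f₄ ∨ IsConj g f₅ := by
  haveI : NeZero (2 ^ r) := ⟨by positivity⟩
  have hn2 : 2 < 2 ^ r := by have := (pow_facts hr).2.2; omega
  have hH2 := H_add_H hr
  have hHH := H_mul_H hr
  have h2ne := two_ne hr
  have hHne := H_ne_zero hr
  have hHne2 := H_ne_two hr
  have hHp2 := H_add_two_ne hr
  have hE' := hE hr
  have hcast2 : (2 : ZMod (2 ^ r)) * ((2 ^ (r - 2) + 1 : ℕ) : ZMod (2 ^ r))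
      = ((2 ^ (r - 1) : ℕ) : ZMod (2 ^ r)) + 2 := by
    push_cast
    linear_combination -hE'
  have h2w : (2 : ZMod (2 ^ r)) * (1 - ((2 ^ (r - 2) : ℕ) : ZMod (2 ^ r)))
      = 2 - ((2 ^ (r - 1) : ℕ) : ZMod (2 ^ r)) := by
    push_cast
    linear_combination hE'
  have hu_unit : IsUnit (((2 ^ (r - 2) + 1 : ℕ) : ZMod (2 ^ r))) := by
    refine isUnit_of_phi hr ?_
    rw [phi_natCast, Nat.cast_add, cast2_two_pow (by omega : r - 2 ≠ 0), Nat.cast_one, zero_add]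
  have hw_unit : IsUnit (1 - ((2 ^ (r - 2) : ℕ) : ZMod (2 ^ r))) := by
    refine isUnit_of_phi hr ?_
    rw [map_sub, map_one, phi_natCast, cast2_two_pow (by omega : r - 2 ≠ 0), sub_zero]
  set H : ZMod (2 ^ r) := ((2 ^ (r - 1) : ℕ) : ZMod (2 ^ r)) with hHdef
  have hl2 : (H - 1) * (H - 1) = 1 := by linear_combination hHH - hH2
  have hl3 : (H + 1) * (H + 1) = 1 := by linear_combination hHH + hH2
  have hl4 : (-1 : ZMod (2 ^ r)) * (-1) = 1 := by ring
  have horder : ∀ (k : ZMod (2 ^ r)) (l : (ZMod (2 ^ r))ˣ),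
      k + (l : ZMod (2 ^ r)) * k = 0 → (l : ZMod (2 ^ r)) * (l : ZMod (2 ^ r)) = 1 →
      ¬(k = 0 ∧ (l : ZMod (2 ^ r)) = 1) → orderOf (psi k l) = 2 := by
    intro k l h1 h2 h3
    refine orderOf_eq_prime ?_ ?_
    · rw [psi_sq]
      refine psi_eq_one h1 ?_
      rw [Units.val_mul]
      exact h2
    · intro h
      obtain ⟨hk, hl⟩ := psi_inj (h.trans psi_one.symm)
      rw [Units.val_one] at hl
      exact h3 ⟨hk, hl⟩
  have hconj : ∀ (k k' : ZMod (2 ^ r)) (l l' : (ZMod (2 ^ r))ˣ),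
      IsConj (psi k l) (psi k' l') →
      (l : ZMod (2 ^ r)) = (l' : ZMod (2 ^ r)) ∧ phi hr k = phi hr k' := by
    intro k k' l l' h
    obtain ⟨c, hc⟩ := isConj_iff.mp h
    obtain ⟨a, b, rfl⟩ := exists_psi hn2 c
    rw [psi_conj] at hc
    obtain ⟨hk, hl⟩ := psi_inj hc
    refine ⟨hl, ?_⟩
    have hb := phi_isUnit hr b.isUnit
    have hlu := phi_isUnit hr l.isUnit
    rw [← hk, map_sub, map_add, map_mul, map_mul, hb, hlu]
    ring
  refine ⟨psi H 1, psi 0 ⟨H - 1, H - 1, hl2, hl2⟩, psi 0 ⟨H + 1, H + 1, hl3, hl3⟩,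
    psi 0 ⟨-1, -1, hl4, hl4⟩, psi 1 ⟨-1, -1, hl4, hl4⟩,
    ⟨fun i => rfl, fun i => rfl⟩, ⟨fun i => rfl, fun i => rfl⟩, ⟨fun i => rfl, fun i => rfl⟩,
    ⟨fun i => rfl, fun i => rfl⟩, ⟨fun i => rfl, fun i => rfl⟩, ?_, ?_, ?_, ?_, ?_, ?_, ?_⟩
  · refine horder _ _ ?_ ?_ ?_
    · rw [Units.val_one, one_mul]
      exact hH2
    · rw [Units.val_one, mul_one]
    · rintro ⟨hk, -⟩
      exact hHne hk
  · refine horder _ _ (by ring) hl2 ?_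
    rintro ⟨-, hl⟩
    have hl' : H - 1 = 1 := hl
    exact hHne2 (by linear_combination hl')
  · refine horder _ _ (by ring) hl3 ?_
    rintro ⟨-, hl⟩
    have hl' : H + 1 = 1 := hl
    exact hHne (by linear_combination hl')
  · refine horder _ _ (by ring) hl4 ?_
    rintro ⟨-, hl⟩
    have hl' : (-1 : ZMod (2 ^ r)) = 1 := hl
    exact h2ne (by linear_combination -hl')
  · refine horder _ _ (show (1 : ZMod (2 ^ r)) + (-1) * 1 = 0 by ring) hl4 ?_
    rintro ⟨-, hl⟩
    have hl' : (-1 : ZMod (2 ^ r)) = 1 := hl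
    exact h2ne (by linear_combination -hl')
  · -- pairwise non-conjugacy
    refine List.Pairwise.cons ?_ (List.Pairwise.cons ?_ (List.Pairwise.cons ?_
      (List.Pairwise.cons ?_ (List.pairwise_singleton _ _))))
    · intro x hx hCon
      simp only [List.mem_cons, List.not_mem_nil, or_false] at hx
      rcases hx with rfl | rfl | rfl | rfl
      · obtain ⟨hl, -⟩ := hconj _ _ _ _ hCon
        have hl' : (1 : ZMod (2 ^ r)) = H - 1 := hl
        exact hHne2 (by linear_combination -hl')
      · obtain ⟨hl, -⟩ := hconj _ _ _ _ hCon
        have hl' : (1 : ZMod (2 ^ r)) = H + 1 := hl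
        exact hHne (by linear_combination -hl')
      · obtain ⟨hl, -⟩ := hconj _ _ _ _ hCon
        have hl' : (1 : ZMod (2 ^ r)) = -1 := hl
        exact h2ne (by linear_combination hl')
      · obtain ⟨hl, -⟩ := hconj _ _ _ _ hCon
        have hl' : (1 : ZMod (2 ^ r)) = -1 := hl
        exact h2ne (by linear_combination hl')
    · intro x hx hCon
      simp only [List.mem_cons, List.not_mem_nil, or_false] at hx
      rcases hx with rfl | rfl | rfl
      · obtain ⟨hl, -⟩ := hconj _ _ _ _ hCon
        have hl' : H - 1 = H + 1 := hl
        exact h2ne (by linear_combination -hl')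
      · obtain ⟨hl, -⟩ := hconj _ _ _ _ hCon
        have hl' : H - 1 = -1 := hl
        exact hHne (by linear_combination hl')
      · obtain ⟨hl, -⟩ := hconj _ _ _ _ hCon
        have hl' : H - 1 = -1 := hl
        exact hHne (by linear_combination hl')
    · intro x hx hCon
      simp only [List.mem_cons, List.not_mem_nil, or_false] at hx
      rcases hx with rfl | rfl
      · obtain ⟨hl, -⟩ := hconj _ _ _ _ hCon
        have hl' : H + 1 = -1 := hl
        exact hHp2 (by linear_combination hl')
      · obtain ⟨hl, -⟩ := hconj _ _ _ _ hCon
        have hl' : H + 1 = -1 := hl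
        exact hHp2 (by linear_combination hl')
    · intro x hx hCon
      simp only [List.mem_cons, List.not_mem_nil, or_false] at hx
      rcases hx with rfl
      obtain ⟨-, hk⟩ := hconj _ _ _ _ hCon
      rw [map_zero, map_one] at hk
      exact absurd hk (by decide)
  · -- classification of involutions
    intro g hg
    obtain ⟨k, l, rfl⟩ := exists_psi hn2 g
    have hsq : (psi k l) ^ 2 = 1 := by
      have h0 := pow_orderOf_eq_one (psi k l)
      rw [hg] at h0
      exact h0
    rw [psi_sq] at hsq
    obtain ⟨hk0, hll⟩ := psi_inj (hsq.trans psi_one.symm)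
    rw [Units.val_mul, Units.val_one] at hll
    have hne1 : ¬(k = 0 ∧ (l : ZMod (2 ^ r)) = 1) := by
      rintro ⟨hk1, hl1⟩
      rw [psi_eq_one hk1 hl1] at hg
      simp at hg
    rcases sq_cases hr hll with h1 | h1 | h1 | h1
    · -- l = 1
      have hl1 : l = 1 := Units.ext (by rw [h1, Units.val_one])
      subst hl1
      rw [Units.val_one, one_mul] at hk0
      have h2k : 2 * k = 0 := by linear_combination hk0
      rcases two_mul_eq_zero hr h2k with hk1 | hk1
      · exact absurd ⟨hk1, Units.val_one⟩ hne1
      · rw [← hHdef] at hk1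
        subst hk1
        left
        exact IsConj.refl _
    · -- l = H + 1
      rw [← hHdef] at h1
      have hleq : l = ⟨H + 1, H + 1, hl3, hl3⟩ := Units.ext (by rw [h1])
      subst hleq
      have hk0' : k + (H + 1) * k = 0 := hk0
      have h2uk : 2 * (((2 ^ (r - 2) + 1 : ℕ) : ZMod (2 ^ r)) * k) = 0 := by
        linear_combination k * hcast2 + hk0'
      obtain ⟨U, hU⟩ := hu_unit
      rcases two_mul_eq_zero hr h2uk with huk | huk
      · have hk1 : k = 0 := by
          have h3 : k = ↑U⁻¹ * (↑U * k) := (Units.inv_mul_cancel_left U k).symm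
          rw [hU, huk, mul_zero] at h3
          exact h3
        subst hk1
        right; right; left
        exact IsConj.refl _
      · rw [← hHdef] at huk
        have hUodd := phi_isUnit hr (U⁻¹).isUnit
        obtain ⟨t, ht⟩ := phi_eq_one hr hUodd
        have hk1 : k = H := by
          have h4 : k = (↑U⁻¹ : ZMod (2 ^ r)) * H := by
            rw [← huk, ← hU]
            exact (Units.inv_mul_cancel_left U k).symm
          rw [h4, ht]
          linear_combination t * hH2
        subst hk1
        right; right; left
        refine isConj_psi_of 1 H 0 1 _ ?_
        show (1 : ZMod (2 ^ r)) + 1 * H - (H + 1) * 1 = 0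
        ring
    · -- l = H - 1
      rw [← hHdef] at h1
      have hleq : l = ⟨H - 1, H - 1, hl2, hl2⟩ := Units.ext (by rw [h1])
      subst hleq
      have hk0' : k + (H - 1) * k = 0 := hk0
      have hkH : k * ((2 ^ (r - 1) : ℕ) : ZMod (2 ^ r)) = 0 := by
        rw [← hHdef]
        linear_combination hk0'
      obtain ⟨t, rfl⟩ := mul_H_even hr hkH
      right; left
      obtain ⟨W, hW⟩ := hw_unit
      have hv : (1 - ((2 ^ (r - 2) : ℕ) : ZMod (2 ^ r))) * (↑W⁻¹ : ZMod (2 ^ r)) = 1 := by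
        rw [← hW]
        exact W.mul_inv
      refine isConj_psi_of (-((↑W⁻¹ : ZMod (2 ^ r)) * t)) (2 * t) 0 1 _ ?_
      show -((↑W⁻¹ : ZMod (2 ^ r)) * t) + 1 * (2 * t)
        - (H - 1) * (-((↑W⁻¹ : ZMod (2 ^ r)) * t)) = 0
      linear_combination ((↑W⁻¹ : ZMod (2 ^ r)) * t) * h2w - (2 * t) * hv
    · -- l = -1
      have hleq : l = ⟨-1, -1, hl4, hl4⟩ := Units.ext (by rw [h1])
      subst hleq
      rcases zmod2_cases (phi hr k) with hp | hp
      · obtain ⟨t, rfl⟩ := phi_eq_zero hr hp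
        right; right; right; left
        refine isConj_psi_of (-t) (2 * t) 0 1 _ ?_
        show -t + 1 * (2 * t) - (-1 : ZMod (2 ^ r)) * (-t) = 0
        ring
      · obtain ⟨t, rfl⟩ := phi_eq_one hr hp
        right; right; right; right
        refine isConj_psi_of (-t) (2 * t + 1) 1 1 _ ?_
        show -t + 1 * (2 * t + 1) - (-1 : ZMod (2 ^ r)) * (-t) = 1
        ring
end
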